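/- arXiv:2509.02004 — 6 statements merged into one kernel-verified Lean document; each statement's English description precedes it below -/
import Mathlib

section
/- Under the common-hash (CH) model, the CH estimator is unbiased: for every item i ∈ {1,…,d}, E[f̂_i] = f_i, where f̂_i = b/(nβ(b−1)) · (c̃_{H(i)} − nβ/b − μ). -/
open MeasureTheory ProbabilityTheory

/-- Under the common-hash (CH) model, the CH estimator is unbiased:
for every item `i`, `E[f̂ i] = f i`, where
`f̂ i = b/(nβ(b−1)) · (c̃_{H(i)} − nβ/b − μ)`. -/
theorem ch_estimator_unbiased
    {Ω : Type*} [MeasurableSpace Ω] (P : Measure Ω) [IsProbabilityMeasure P]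
    -- numbers of users, items, hash range
    (n d b : ℕ) (hn : 1 ≤ n) (hd : 1 ≤ d) (hb : 2 ≤ b)
    -- sampling probability, dummy-count mean and variance
    (β : ℝ) (hβ0 : 0 < β) (hβ1 : β ≤ 1) (μ σ2 : ℝ)
    -- users' items
    (x : Fin n → Fin d)
    -- random hash values, sampling indicators, dummy counts
    (H : Fin d → Ω → Fin b) (α : Fin n → Ω → ℝ) (z : Fin b → Ω → ℝ)
    (hHmeas : ∀ k, Measurable (H k))
    (hαmeas : ∀ j, Measurable (α j))
    (hzmeas : ∀ k, Measurable (z k))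
    -- hash values are pairwise independent with uniform marginals on {1,…,b}
    (hHunif : ∀ k v, P (H k ⁻¹' {v}) = 1 / b)
    (hHpair : ∀ k k', k ≠ k' → IndepFun (H k) (H k') P)
    -- i.i.d. Bernoulli(β) sampling indicators, independent of the hash values
    (hα01 : ∀ j ω, α j ω = 0 ∨ α j ω = 1)
    (hαmean : ∀ j, ∫ ω, α j ω ∂P = β)
    (hαiid : iIndepFun α P)
    (hαident : ∀ j j', IdentDistrib (α j) (α j') P P)
    (hαH : IndepFun (fun ω (j : Fin n) => α j ω) (fun ω (k : Fin d) => H k ω) P)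
    -- i.i.d. nonnegative-integer-valued dummy counts with mean μ and variance σ²,
    -- independent of the hash values and the sampling indicators
    (hzNat : ∀ k ω, ∃ m : ℕ, z k ω = m)
    (hzint : ∀ k, Integrable (z k) P)
    (hzmean : ∀ k, ∫ ω, z k ω ∂P = μ)
    (hzL2 : ∀ k, MemLp (z k) 2 P)
    (hzvar : ∀ k, variance (z k) P = σ2)
    (hziid : iIndepFun z P)
    (hzident : ∀ k k', IdentDistrib (z k) (z k') P P)
    (hzrest : IndepFun (fun ω (k : Fin b) => z k ω)
      (fun ω => ((fun j : Fin n => α j ω), (fun k : Fin d => H k ω))) P)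
    -- counts: c̃_k = Σ_j α_j · 1{H(x_j) = k} + z_k
    (c : Fin b → Ω → ℝ)
    (hc : ∀ k ω, c k ω = (∑ j, α j ω * (if H (x j) ω = k then 1 else 0)) + z k ω)
    -- estimator: f̂_i = b/(nβ(b−1)) · (c̃_{H(i)} − nβ/b − μ)
    (fhat : Fin d → Ω → ℝ)
    (hfhat : ∀ i ω, fhat i ω =
      ((b : ℝ) / (n * β * ((b : ℝ) - 1))) * (c (H i ω) ω - n * β / b - μ))
    -- relative frequencies: f_i = (1/n)·#{j : x_j = i}
    (f : Fin d → ℝ)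
    (hf : ∀ i, f i = ((Finset.univ.filter fun j => x j = i).card : ℝ) / n)
    (i : Fin d) :
    ∫ ω, fhat i ω ∂P = f i := by
  classical
  have hb2 : (2:ℝ) ≤ (b:ℝ) := by exact_mod_cast hb
  have hb0 : (b:ℝ) ≠ 0 := by linarith
  have hbE0 : (b:ENNReal) ≠ 0 := by exact_mod_cast (by omega : b ≠ 0)
  have hbET : (b:ENNReal) ≠ ⊤ := ENNReal.natCast_ne_top b
  have hn0 : (n:ℝ) ≠ 0 := by
    have : (1:ℝ) ≤ (n:ℝ) := by exact_mod_cast hn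
    linarith
  have hβ0' : β ≠ 0 := ne_of_gt hβ0
  have hbm1 : (b:ℝ) - 1 ≠ 0 := by linarith
  set C : ℝ := (b:ℝ) / (n * β * ((b:ℝ) - 1)) with hC
  set m : ℕ := (Finset.univ.filter fun j => x j = i).card with hm
  -- measurability of indicators
  have hmeasInd : ∀ a : Fin d, Measurable (fun ω => if H a ω = H i ω then (1:ℝ) else 0) := by
    intro a
    have : (fun ω => if H a ω = H i ω then (1:ℝ) else 0)
        = (fun p : Fin b × Fin b => if p.1 = p.2 then (1:ℝ) else 0)
          ∘ (fun ω => (H a ω, H i ω)) := rfl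
    rw [this]
    exact (measurable_of_countable _).comp ((hHmeas a).prodMk (hHmeas i))
  have hmeasIndk : ∀ k : Fin b, Measurable (fun ω => if H i ω = k then (1:ℝ) else 0) := by
    intro k
    have : (fun ω => if H i ω = k then (1:ℝ) else 0)
        = (fun v : Fin b => if v = k then (1:ℝ) else 0) ∘ (H i) := rfl
    rw [this]
    exact (measurable_of_countable _).comp (hHmeas i)
  -- the equality set and its measure
  have hSmeas : ∀ a : Fin d, MeasurableSet {ω | H a ω = H i ω} := by
    intro a
    have hset : {ω | H a ω = H i ω} = ⋃ v : Fin b, (H a ⁻¹' {v} ∩ H i ⁻¹' {v}) := by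
      ext ω
      simp only [Set.mem_setOf_eq, Set.mem_iUnion, Set.mem_inter_iff, Set.mem_preimage,
        Set.mem_singleton_iff]
      exact ⟨fun h => ⟨H i ω, h, rfl⟩, fun ⟨v, h1, h2⟩ => by rw [h1, h2]⟩
    rw [hset]
    exact MeasurableSet.iUnion fun v =>
      ((hHmeas a) (measurableSet_singleton v)).inter ((hHmeas i) (measurableSet_singleton v))
  have hPeq : ∀ a : Fin d, a ≠ i →
      ∫ ω, (if H a ω = H i ω then (1:ℝ) else 0) ∂P = 1 / b := by
    intro a ha
    have hset : {ω | H a ω = H i ω} = ⋃ v : Fin b, (H a ⁻¹' {v} ∩ H i ⁻¹' {v}) := by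
      ext ω
      simp only [Set.mem_setOf_eq, Set.mem_iUnion, Set.mem_inter_iff, Set.mem_preimage,
        Set.mem_singleton_iff]
      exact ⟨fun h => ⟨H i ω, h, rfl⟩, fun ⟨v, h1, h2⟩ => by rw [h1, h2]⟩
    have hdisj : Pairwise (Function.onFun Disjoint
        fun v : Fin b => H a ⁻¹' {v} ∩ H i ⁻¹' {v}) := by
      intro v v' hvv'
      refine Set.disjoint_left.2 fun ω hω hω' => hvv' ?_
      have h1 : H a ω = v := hω.1
      have h2 : H a ω = v' := hω'.1
      rw [← h1, h2]
    have hmeasv : ∀ v : Fin b, MeasurableSet (H a ⁻¹' {v} ∩ H i ⁻¹' {v}) := fun v =>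
      ((hHmeas a) (measurableSet_singleton v)).inter ((hHmeas i) (measurableSet_singleton v))
    have hPS : P {ω | H a ω = H i ω} = 1 / b := by
      rw [hset, measure_iUnion hdisj hmeasv, tsum_fintype]
      have hterm : ∀ v : Fin b, P (H a ⁻¹' {v} ∩ H i ⁻¹' {v}) = (1/b) * (1/b) := fun v => by
        rw [(hHpair a i ha).measure_inter_preimage_eq_mul _ _
          (measurableSet_singleton v) (measurableSet_singleton v), hHunif, hHunif]
      rw [Finset.sum_congr rfl fun v _ => hterm v, Finset.sum_const, Finset.card_univ,
        Fintype.card_fin, nsmul_eq_mul]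
      rw [one_div, ← mul_assoc, ENNReal.mul_inv_cancel hbE0 hbET, one_mul]
    have hfun : (fun ω => if H a ω = H i ω then (1:ℝ) else 0)
        = Set.indicator {ω | H a ω = H i ω} (fun _ => (1:ℝ)) := by
      ext ω
      by_cases h : H a ω = H i ω <;> simp [Set.indicator, h]
    rw [hfun, integral_indicator_const _ (hSmeas a), measureReal_def, hPS, smul_eq_mul, mul_one]
    simp [ENNReal.toReal_div]
  -- integral of the single-hash indicator
  have hPk : ∀ k : Fin b, ∫ ω, (if H i ω = k then (1:ℝ) else 0) ∂P = 1 / b := by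
    intro k
    have hfun : (fun ω => if H i ω = k then (1:ℝ) else 0)
        = Set.indicator (H i ⁻¹' {k}) (fun _ => (1:ℝ)) := by
      ext ω
      by_cases h : H i ω = k <;> simp [Set.indicator, h]
    rw [hfun, integral_indicator_const _ ((hHmeas i) (measurableSet_singleton k)), measureReal_def, hHunif,
      smul_eq_mul, mul_one]
    simp [ENNReal.toReal_div]
  -- independence facts
  have hindαg : ∀ j : Fin n,
      IndepFun (α j) (fun ω => if H (x j) ω = H i ω then (1:ℝ) else 0) P := by
    intro j
    exact hαH.comp (φ := fun v : Fin n → ℝ => v j)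
      (ψ := fun h : Fin d → Fin b => if h (x j) = h i then (1:ℝ) else 0)
      (measurable_pi_apply j) (measurable_of_countable _)
  have hindz : ∀ k : Fin b,
      IndepFun (z k) (fun ω => if H i ω = k then (1:ℝ) else 0) P := by
    intro k
    exact hzrest.comp (φ := fun v : Fin b → ℝ => v k)
      (ψ := (fun h : Fin d → Fin b => if h i = k then (1:ℝ) else 0) ∘ Prod.snd)
      (measurable_pi_apply k) ((measurable_of_countable _).comp measurable_snd)
  -- key integrals
  have hgval : ∀ j : Fin n,
      ∫ ω, α j ω * (if H (x j) ω = H i ω then (1:ℝ) else 0) ∂P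
        = if x j = i then β else β * (1/b) := by
    intro j
    by_cases hxj : x j = i
    · rw [if_pos hxj]
      have : ∀ ω, α j ω * (if H (x j) ω = H i ω then (1:ℝ) else 0) = α j ω := by
        intro ω; rw [hxj]; simp
      rw [integral_congr_ae (Filter.Eventually.of_forall this), hαmean]
    · rw [if_neg hxj]
      calc ∫ ω, α j ω * (if H (x j) ω = H i ω then (1:ℝ) else 0) ∂P
          = (∫ ω, α j ω ∂P) * ∫ ω, (if H (x j) ω = H i ω then (1:ℝ) else 0) ∂P :=
            (hindαg j).integral_fun_mul_eq_mul_integral (hαmeas j).aestronglyMeasurable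
              (hmeasInd (x j)).aestronglyMeasurable
        _ = β * (1/b) := by rw [hαmean, hPeq (x j) hxj]
  have hwval : ∀ k : Fin b,
      ∫ ω, z k ω * (if H i ω = k then (1:ℝ) else 0) ∂P = μ * (1/b) := by
    intro k
    calc ∫ ω, z k ω * (if H i ω = k then (1:ℝ) else 0) ∂P
        = (∫ ω, z k ω ∂P) * ∫ ω, (if H i ω = k then (1:ℝ) else 0) ∂P :=
          (hindz k).integral_fun_mul_eq_mul_integral (hzmeas k).aestronglyMeasurable
            (hmeasIndk k).aestronglyMeasurable
      _ = μ * (1/b) := by rw [hzmean, hPk]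
  -- integrability
  have hgInt : ∀ j : Fin n,
      Integrable (fun ω => α j ω * (if H (x j) ω = H i ω then (1:ℝ) else 0)) P := by
    intro j
    refine (integrable_const (1:ℝ)).mono'
      (((hαmeas j).mul (hmeasInd (x j))).aestronglyMeasurable)
      (Filter.Eventually.of_forall fun ω => ?_)
    rcases hα01 j ω with h | h <;> by_cases hh : H (x j) ω = H i ω <;>
      simp [h, hh, abs_le] <;> norm_num
  have hwInt : ∀ k : Fin b,
      Integrable (fun ω => z k ω * (if H i ω = k then (1:ℝ) else 0)) P := by
    intro k
    refine (hzint k).abs.mono' (((hzmeas k).mul (hmeasIndk k)).aestronglyMeasurable)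
      (Filter.Eventually.of_forall fun ω => ?_)
    by_cases hh : H i ω = k <;> simp [hh, abs_nonneg]
  -- pointwise rewriting of the estimator
  have hpt : ∀ ω, fhat i ω = C *
      ((∑ j, α j ω * (if H (x j) ω = H i ω then (1:ℝ) else 0))
        + (∑ k, z k ω * (if H i ω = k then (1:ℝ) else 0)) - ((n:ℝ) * β / b + μ)) := by
    intro ω
    have hzsel : (∑ k, z k ω * (if H i ω = k then (1:ℝ) else 0)) = z (H i ω) ω := by
      rw [Finset.sum_eq_single (H i ω)]
      · simp
      · intro k _ hk
        simp [Ne.symm hk]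
      · intro h; exact absurd (Finset.mem_univ _) h
    rw [hfhat, hc, hzsel]
    ring
  -- compute the integral
  have hInt1 : Integrable (fun ω => ∑ j, α j ω * (if H (x j) ω = H i ω then (1:ℝ) else 0)) P :=
    integrable_finset_sum _ fun j _ => hgInt j
  have hInt2 : Integrable (fun ω => ∑ k, z k ω * (if H i ω = k then (1:ℝ) else 0)) P :=
    integrable_finset_sum _ fun k _ => hwInt k
  have hmain : ∫ ω, fhat i ω ∂P
      = C * (((n:ℝ) * (β * (1/b)) + (m:ℝ) * (β - β * (1/b))) + μ - ((n:ℝ) * β / b + μ)) := by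
    rw [integral_congr_ae (Filter.Eventually.of_forall hpt), integral_const_mul]
    congr 1
    have hAB : Integrable (fun ω => (∑ j, α j ω * (if H (x j) ω = H i ω then (1:ℝ) else 0))
        + (∑ k, z k ω * (if H i ω = k then (1:ℝ) else 0))) P := hInt1.add hInt2
    rw [integral_sub hAB (integrable_const _),
      integral_add hInt1 hInt2, integral_finset_sum _ fun j _ => hgInt j,
      integral_finset_sum _ fun k _ => hwInt k, integral_const]
    simp only [measure_univ, ENNReal.toReal_one, probReal_univ, one_smul]
    congr 1
    congr 1
    · -- sum over users
      have h1 : ∀ j : Fin n, (if x j = i then β else β * (1/b))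
          = β * (1/b) + (if x j = i then β - β * (1/b) else 0) := by
        intro j; split <;> ring
      rw [Finset.sum_congr rfl fun j _ => hgval j,
        Finset.sum_congr rfl fun j _ => h1 j, Finset.sum_add_distrib,
        Finset.sum_const, Finset.card_univ, Fintype.card_fin, nsmul_eq_mul,
        ← Finset.sum_filter, Finset.sum_const, nsmul_eq_mul, ← hm]
    · -- sum over hash values
      rw [Finset.sum_congr rfl fun k _ => hwval k, Finset.sum_const, Finset.card_univ,
        Fintype.card_fin, nsmul_eq_mul]
      field_simp
  rw [hmain, hf, hC, ← hm]
  field_simp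
  ring
end

section
/- Under the common-hash (CH) model with 3-wise independent hash values, the CH estimator f̂_i = b/(nβ(b−1)) · (c̃_{H(i)} − nβ/b − μ) achieves, for every item i ∈ {1,…,d}, the expected squared error E[(f̂_i − f_i)²] = (b²/(n²β²(b−1)²)) · ( n·f_i·β(1−β) + σ² + ω ), where ω = Σ_{j∈{1,…,d}, j≠i} ( (n²f_j²β² + n f_j β(1−β))(b−1)/b² + n f_j β(1−β)/b² ). -/
open MeasureTheory ProbabilityTheory

section AuxCH

variable {Ω : Type*} [MeasurableSpace Ω] {P : Measure Ω} [IsProbabilityMeasure P]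

lemma auxCH_integrable_of_bdd {g : Ω → ℝ} (hg : Measurable g) {Cst : ℝ}
    (hC : ∀ ω, |g ω| ≤ Cst) : Integrable g P :=
  (integrable_const Cst).mono' hg.aestronglyMeasurable
    (Filter.Eventually.of_forall fun ω => by simpa using hC ω)

/-- integral of the indicator of a measurable set. -/
lemma auxCH_integral_ind (p : Ω → Prop) [DecidablePred p] (hs : MeasurableSet {ω | p ω}) :
    ∫ ω, (if p ω then (1:ℝ) else 0) ∂P = (P {ω | p ω}).toReal := by
  have heq : (fun ω => (if p ω then (1:ℝ) else 0))
      = Set.indicator {ω | p ω} (fun _ => (1:ℝ)) := by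
    ext ω; by_cases h : p ω <;> simp [h, Set.indicator_apply]
  rw [heq, integral_indicator_const (1:ℝ) hs, smul_eq_mul, mul_one]
  rfl


variable {d b : ℕ} {H : Fin d → Ω → Fin b}

lemma auxCH_E_ind_val (hHmeas : ∀ k, Measurable (H k))
    (hHunif : ∀ k v, P (H k ⁻¹' {v}) = 1 / b) (k : Fin d) (v : Fin b) :
    ∫ ω, (if H k ω = v then (1:ℝ) else 0) ∂P = 1 / b := by
  have hms : MeasurableSet {ω | H k ω = v} := (hHmeas k) (measurableSet_singleton v)
  rw [auxCH_integral_ind (fun ω => H k ω = v) hms]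
  have : {ω | H k ω = v} = H k ⁻¹' {v} := rfl
  rw [this, hHunif k v]
  simp [ENNReal.toReal_div]

lemma auxCH_E_ind_pair (hb : 2 ≤ b) (hHmeas : ∀ k, Measurable (H k))
    (hHunif : ∀ k v, P (H k ⁻¹' {v}) = 1 / b)
    (hH2 : ∀ k1 k2 : Fin d, k1 ≠ k2 → ∀ v1 v2 : Fin b,
      P (H k1 ⁻¹' {v1} ∩ H k2 ⁻¹' {v2}) = P (H k1 ⁻¹' {v1}) * P (H k2 ⁻¹' {v2}))
    (i j : Fin d) (hji : j ≠ i) :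
    ∫ ω, (if H j ω = H i ω then (1:ℝ) else 0) ∂P = 1 / b := by
  have hb0 : (b:ℝ) ≠ 0 := by positivity
  have hset : {ω | H j ω = H i ω} = ⋃ v, (H j ⁻¹' {v} ∩ H i ⁻¹' {v}) := by
    ext ω; simp only [Set.mem_setOf_eq, Set.mem_iUnion, Set.mem_inter_iff, Set.mem_preimage,
      Set.mem_singleton_iff]
    exact ⟨fun h => ⟨H i ω, h, rfl⟩, fun ⟨v, h1, h2⟩ => h1.trans h2.symm⟩
  have hmeas : ∀ v : Fin b, MeasurableSet (H j ⁻¹' {v} ∩ H i ⁻¹' {v}) :=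
    fun v => ((hHmeas j) (measurableSet_singleton v)).inter ((hHmeas i) (measurableSet_singleton v))
  have hP : P {ω | H j ω = H i ω} = (b : ENNReal) * (1/b * (1/b)) := by
    rw [hset, measure_iUnion ?_ hmeas]
    · rw [tsum_fintype]
      have : ∀ v : Fin b, P (H j ⁻¹' {v} ∩ H i ⁻¹' {v}) = 1/b * (1/b) := by
        intro v; rw [hH2 j i hji v v, hHunif, hHunif]
      simp [this, Finset.sum_const]
    · intro v v' hvv'
      simp only [Function.onFun]
      rw [Set.disjoint_left]
      rintro ω ⟨h1, _⟩ ⟨h2, _⟩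
      simp only [Set.mem_preimage, Set.mem_singleton_iff] at h1 h2
      exact hvv' (h1 ▸ h2 ▸ rfl)
  have hms : MeasurableSet {ω | H j ω = H i ω} := by
    rw [hset]; exact MeasurableSet.iUnion hmeas
  rw [auxCH_integral_ind (fun ω => H j ω = H i ω) hms, hP]
  simp [ENNReal.toReal_mul, ENNReal.toReal_div]
  field_simp

lemma auxCH_E_ind_triple (hb : 2 ≤ b) (hHmeas : ∀ k, Measurable (H k))
    (hHunif : ∀ k v, P (H k ⁻¹' {v}) = 1 / b)
    (hH3 : ∀ k1 k2 k3 : Fin d, k1 ≠ k2 → k1 ≠ k3 → k2 ≠ k3 → ∀ v1 v2 v3 : Fin b,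
      P (H k1 ⁻¹' {v1} ∩ H k2 ⁻¹' {v2} ∩ H k3 ⁻¹' {v3})
        = P (H k1 ⁻¹' {v1}) * P (H k2 ⁻¹' {v2}) * P (H k3 ⁻¹' {v3}))
    (i j j' : Fin d) (hji : j ≠ i) (hj'i : j' ≠ i) (hjj' : j ≠ j') :
    ∫ ω, (if H j ω = H i ω ∧ H j' ω = H i ω then (1:ℝ) else 0) ∂P = 1 / b^2 := by
  have hb0 : (b:ℝ) ≠ 0 := by positivity
  have hset : {ω | H j ω = H i ω ∧ H j' ω = H i ω}
      = ⋃ v, (H j ⁻¹' {v} ∩ H j' ⁻¹' {v} ∩ H i ⁻¹' {v}) := by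
    ext ω; simp only [Set.mem_setOf_eq, Set.mem_iUnion, Set.mem_inter_iff, Set.mem_preimage,
      Set.mem_singleton_iff]
    constructor
    · rintro ⟨h1, h2⟩; exact ⟨H i ω, ⟨h1, h2⟩, rfl⟩
    · rintro ⟨v, ⟨h1, h2⟩, h3⟩; exact ⟨h1.trans h3.symm, h2.trans h3.symm⟩
  have hmeas : ∀ v : Fin b, MeasurableSet (H j ⁻¹' {v} ∩ H j' ⁻¹' {v} ∩ H i ⁻¹' {v}) :=
    fun v => (((hHmeas j) (measurableSet_singleton v)).inter
      ((hHmeas j') (measurableSet_singleton v))).inter ((hHmeas i) (measurableSet_singleton v))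
  have hP : P {ω | H j ω = H i ω ∧ H j' ω = H i ω} = (b : ENNReal) * (1/b * (1/b) * (1/b)) := by
    rw [hset, measure_iUnion ?_ hmeas]
    · rw [tsum_fintype]
      have : ∀ v : Fin b, P (H j ⁻¹' {v} ∩ H j' ⁻¹' {v} ∩ H i ⁻¹' {v}) = 1/b * (1/b) * (1/b) := by
        intro v; rw [hH3 j j' i hjj' hji hj'i v v v, hHunif, hHunif, hHunif]
      simp [this, Finset.sum_const]
    · intro v v' hvv'
      simp only [Function.onFun]
      rw [Set.disjoint_left]
      rintro ω ⟨⟨h1, _⟩, _⟩ ⟨⟨h2, _⟩, _⟩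
      simp only [Set.mem_preimage, Set.mem_singleton_iff] at h1 h2
      exact hvv' (h1 ▸ h2 ▸ rfl)
  have hms : MeasurableSet {ω | H j ω = H i ω ∧ H j' ω = H i ω} := by
    rw [hset]; exact MeasurableSet.iUnion hmeas
  rw [auxCH_integral_ind (fun ω => H j ω = H i ω ∧ H j' ω = H i ω) hms, hP]
  simp [ENNReal.toReal_mul, ENNReal.toReal_div]
  field_simp

end AuxCH

set_option maxHeartbeats 2000000

/-- Under the common-hash (CH) model with 3-wise independent hash values,
the CH estimator `f̂ i = b/(nβ(b−1)) · (c̃_{H(i)} − nβ/b − μ)` achieves, for every item `i`,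
the expected squared error
`E[(f̂ i − f i)²] = (b²/(n²β²(b−1)²)) · (n f_i β(1−β) + σ² + ω)`, where
`ω = Σ_{j ≠ i} ((n²f_j²β² + n f_j β(1−β))(b−1)/b² + n f_j β(1−β)/b²)`. -/
theorem ch_estimator_expected_squared_error
    {Ω : Type*} [MeasurableSpace Ω] (P : Measure Ω) [IsProbabilityMeasure P]
    -- numbers of users, items, hash range
    (n d b : ℕ) (hn : 1 ≤ n) (hd : 1 ≤ d) (hb : 2 ≤ b)
    -- sampling probability, dummy-count mean and variance
    (β : ℝ) (hβ0 : 0 < β) (hβ1 : β ≤ 1) (μ σ2 : ℝ)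
    -- users' items
    (x : Fin n → Fin d)
    -- random hash values, sampling indicators, dummy counts
    (H : Fin d → Ω → Fin b) (α : Fin n → Ω → ℝ) (z : Fin b → Ω → ℝ)
    (hHmeas : ∀ k, Measurable (H k))
    (hαmeas : ∀ j, Measurable (α j))
    (hzmeas : ∀ k, Measurable (z k))
    -- hash values have uniform marginals on {1,…,b}
    (hHunif : ∀ k v, P (H k ⁻¹' {v}) = 1 / b)
    -- hash values are 3-wise independent: every pair and every triple of distinct
    -- hash values is mutually independent
    (hH2 : ∀ k1 k2 : Fin d, k1 ≠ k2 → ∀ v1 v2 : Fin b,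
      P (H k1 ⁻¹' {v1} ∩ H k2 ⁻¹' {v2}) = P (H k1 ⁻¹' {v1}) * P (H k2 ⁻¹' {v2}))
    (hH3 : ∀ k1 k2 k3 : Fin d, k1 ≠ k2 → k1 ≠ k3 → k2 ≠ k3 → ∀ v1 v2 v3 : Fin b,
      P (H k1 ⁻¹' {v1} ∩ H k2 ⁻¹' {v2} ∩ H k3 ⁻¹' {v3})
        = P (H k1 ⁻¹' {v1}) * P (H k2 ⁻¹' {v2}) * P (H k3 ⁻¹' {v3}))
    -- i.i.d. Bernoulli(β) sampling indicators, independent of the hash values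
    (hα01 : ∀ j ω, α j ω = 0 ∨ α j ω = 1)
    (hαmean : ∀ j, ∫ ω, α j ω ∂P = β)
    (hαiid : iIndepFun α P)
    (hαident : ∀ j j', IdentDistrib (α j) (α j') P P)
    (hαH : IndepFun (fun ω (j : Fin n) => α j ω) (fun ω (k : Fin d) => H k ω) P)
    -- i.i.d. nonnegative-integer-valued dummy counts with mean μ and variance σ²,
    -- independent of the hash values and the sampling indicators
    (hzNat : ∀ k ω, ∃ m : ℕ, z k ω = m)
    (hzint : ∀ k, Integrable (z k) P)
    (hzmean : ∀ k, ∫ ω, z k ω ∂P = μ)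
    (hzL2 : ∀ k, MemLp (z k) 2 P)
    (hzvar : ∀ k, variance (z k) P = σ2)
    (hziid : iIndepFun z P)
    (hzident : ∀ k k', IdentDistrib (z k) (z k') P P)
    (hzrest : IndepFun (fun ω (k : Fin b) => z k ω)
      (fun ω => ((fun j : Fin n => α j ω), (fun k : Fin d => H k ω))) P)
    -- counts: c̃_k = Σ_j α_j · 1{H(x_j) = k} + z_k
    (c : Fin b → Ω → ℝ)
    (hc : ∀ k ω, c k ω = (∑ j, α j ω * (if H (x j) ω = k then 1 else 0)) + z k ω)
    -- estimator: f̂_i = b/(nβ(b−1)) · (c̃_{H(i)} − nβ/b − μ)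
    (fhat : Fin d → Ω → ℝ)
    (hfhat : ∀ i ω, fhat i ω =
      ((b : ℝ) / (n * β * ((b : ℝ) - 1))) * (c (H i ω) ω - n * β / b - μ))
    -- relative frequencies: f_i = (1/n)·#{j : x_j = i}
    (f : Fin d → ℝ)
    (hf : ∀ i, f i = ((Finset.univ.filter fun j => x j = i).card : ℝ) / n)
    (i : Fin d)
    -- the hash-collision term ω
    (w : ℝ)
    (hw : w = ∑ j ∈ Finset.univ.erase i,
      (((n : ℝ)^2 * (f j)^2 * β^2 + n * f j * β * (1 - β)) * ((b : ℝ) - 1) / (b : ℝ)^2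
        + n * f j * β * (1 - β) / (b : ℝ)^2)) :
    ∫ ω, (fhat i ω - f i)^2 ∂P
      = ((b : ℝ)^2 / ((n : ℝ)^2 * β^2 * ((b : ℝ) - 1)^2))
          * ((n : ℝ) * f i * β * (1 - β) + σ2 + w) := by
  -- basic numeric facts
  have hb2 : (2:ℝ) ≤ (b:ℝ) := by exact_mod_cast hb
  have hb0 : (b:ℝ) ≠ 0 := by linarith
  have hb1 : (b:ℝ) - 1 ≠ 0 := by intro h; linarith
  have hn1 : (1:ℝ) ≤ (n:ℝ) := by exact_mod_cast hn
  have hn0 : (n:ℝ) ≠ 0 := by linarith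
  have hβne : β ≠ 0 := ne_of_gt hβ0
  -- abbreviations
  set U : Fin d → Finset (Fin n) := fun j => Finset.univ.filter (fun u => x u = j) with hU
  set m : Fin d → ℝ := fun j => ((U j).card : ℝ) with hmdef
  set I : Fin d → Ω → ℝ := fun j ω => if H j ω = H i ω then 1 else 0 with hIdef
  set A : Fin d → Ω → ℝ := fun j ω => ∑ u ∈ U j, α u ω with hAdef
  set S : Ω → ℝ := fun ω => ∑ j, I j ω * A j ω with hSdef
  set Z : Ω → ℝ := fun ω => z (H i ω) ω with hZdef
  set C : ℝ := (b:ℝ) / (n * β * ((b:ℝ) - 1)) with hCdef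
  set κ : ℝ := (n:ℝ) * β / b + μ with hκdef
  set v : Fin d → ℝ :=
    fun j => (m j * m j * β^2 + m j * (β - β^2))/b - (m j * β/b)^2 with hvdef
  set μX : Fin d → ℝ := fun j => if j = i then m j * β else m j * β / b with hμXdef
  have hfm : ∀ j, f j = m j / n := by
    intro j; rw [hf j, hmdef]
  have hm0 : ∀ j, 0 ≤ m j := by intro j; rw [hmdef]; positivity
  have hmsum : ∑ j, m j = (n:ℝ) := by
    rw [hmdef]
    rw [← Nat.cast_sum]
    have := (Finset.card_eq_sum_card_fiberwise
      (f := x) (s := Finset.univ) (t := Finset.univ) (fun u _ => Finset.mem_univ (x u)))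
    simp only [Finset.card_univ, Fintype.card_fin] at this
    rw [hU]
    exact_mod_cast this.symm
  have herase : ∑ j ∈ Finset.univ.erase i, m j = (n:ℝ) - m i := by
    have h := Finset.add_sum_erase Finset.univ m (Finset.mem_univ i)
    rw [hmsum] at h; linarith
  -- measurability and bounds
  have hαb : ∀ u ω, |α u ω| ≤ 1 := by
    intro u ω; rcases hα01 u ω with h | h <;> rw [h] <;> norm_num
  have hms_set : ∀ j : Fin d, MeasurableSet {ω | H j ω = H i ω} := by
    intro j
    have hset : {ω | H j ω = H i ω} = ⋃ vv, (H j ⁻¹' {vv} ∩ H i ⁻¹' {vv}) := by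
      ext ω; simp only [Set.mem_setOf_eq, Set.mem_iUnion, Set.mem_inter_iff, Set.mem_preimage,
        Set.mem_singleton_iff]
      exact ⟨fun h => ⟨H i ω, h, rfl⟩, fun ⟨vv, h1, h2⟩ => h1.trans h2.symm⟩
    rw [hset]
    exact MeasurableSet.iUnion fun vv => ((hHmeas j) (measurableSet_singleton vv)).inter
      ((hHmeas i) (measurableSet_singleton vv))
  have hImeas : ∀ j, Measurable (I j) := by
    intro j; rw [hIdef]
    exact Measurable.ite (hms_set j) measurable_const measurable_const
  have hIb : ∀ j ω, |I j ω| ≤ 1 := by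
    intro j ω; rw [hIdef]; dsimp only; split <;> norm_num
  have hI01 : ∀ j ω, I j ω = 0 ∨ I j ω = 1 := by
    intro j ω; rw [hIdef]; dsimp only; split
    · right; rfl
    · left; rfl
  have hAmeas : ∀ j, Measurable (A j) := by
    intro j; rw [hAdef]
    exact Finset.measurable_sum _ fun u _ => hαmeas u
  have hAb : ∀ j ω, |A j ω| ≤ m j := by
    intro j ω; rw [hAdef, hmdef]; dsimp only
    calc |∑ u ∈ U j, α u ω| ≤ ∑ u ∈ U j, |α u ω| := Finset.abs_sum_le_sum_abs _ _
    _ ≤ ∑ u ∈ U j, 1 := Finset.sum_le_sum fun u _ => hαb u ω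
    _ = ((U j).card : ℝ) := by simp
  have hSmeas : Measurable S := by
    rw [hSdef]
    exact Finset.measurable_sum _ fun j _ => (hImeas j).mul (hAmeas j)
  have hSb : ∀ ω, |S ω| ≤ (n:ℝ) := by
    intro ω; rw [hSdef]; dsimp only
    calc |∑ j, I j ω * A j ω| ≤ ∑ j, |I j ω * A j ω| := Finset.abs_sum_le_sum_abs _ _
    _ ≤ ∑ j, m j := by
        refine Finset.sum_le_sum fun j _ => ?_
        rw [abs_mul]
        calc |I j ω| * |A j ω| ≤ 1 * m j := by
              exact mul_le_mul (hIb j ω) (hAb j ω) (abs_nonneg _) zero_le_one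
        _ = m j := one_mul _
    _ = (n:ℝ) := hmsum
  -- integrability
  have intα : ∀ u, Integrable (α u) P := fun u => auxCH_integrable_of_bdd (hαmeas u) (hαb u)
  have intI : ∀ j, Integrable (I j) P := fun j => auxCH_integrable_of_bdd (hImeas j) (hIb j)
  have intαα : ∀ u u', Integrable (fun ω => α u ω * α u' ω) P := by
    intro u u'
    refine auxCH_integrable_of_bdd ((hαmeas u).mul (hαmeas u')) (Cst := 1) fun ω => ?_
    rw [abs_mul]
    calc |α u ω| * |α u' ω| ≤ 1 * 1 :=
          mul_le_mul (hαb u ω) (hαb u' ω) (abs_nonneg _) zero_le_one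
    _ = 1 := one_mul _
  have intII : ∀ j j', Integrable (fun ω => I j ω * I j' ω) P := by
    intro j j'
    refine auxCH_integrable_of_bdd ((hImeas j).mul (hImeas j')) (Cst := 1) fun ω => ?_
    rw [abs_mul]
    calc |I j ω| * |I j' ω| ≤ 1 * 1 :=
          mul_le_mul (hIb j ω) (hIb j' ω) (abs_nonneg _) zero_le_one
    _ = 1 := one_mul _
  have intAA : ∀ j j', Integrable (fun ω => A j ω * A j' ω) P := by
    intro j j'
    refine auxCH_integrable_of_bdd ((hAmeas j).mul (hAmeas j')) (Cst := m j * m j') fun ω => ?_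
    rw [abs_mul]
    exact mul_le_mul (hAb j ω) (hAb j' ω) (abs_nonneg _) (hm0 j)
  have intS : Integrable S P := auxCH_integrable_of_bdd hSmeas hSb
  have intS2 : Integrable (fun ω => S ω * S ω) P := by
    refine auxCH_integrable_of_bdd (hSmeas.mul hSmeas) (Cst := (n:ℝ) * n) fun ω => ?_
    rw [abs_mul]
    exact mul_le_mul (hSb ω) (hSb ω) (abs_nonneg _) (by positivity)
  have intXX : ∀ j j', Integrable (fun ω => (I j ω * A j ω) * (I j' ω * A j' ω)) P := by
    intro j j'
    refine auxCH_integrable_of_bdd (((hImeas j).mul (hAmeas j)).mul ((hImeas j').mul (hAmeas j')))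
      (Cst := m j * m j') fun ω => ?_
    rw [abs_mul, abs_mul, abs_mul]
    have h1 : |I j ω| * |A j ω| ≤ m j := by
      calc |I j ω| * |A j ω| ≤ 1 * m j :=
            mul_le_mul (hIb j ω) (hAb j ω) (abs_nonneg _) zero_le_one
      _ = m j := one_mul _
    have h2 : |I j' ω| * |A j' ω| ≤ m j' := by
      calc |I j' ω| * |A j' ω| ≤ 1 * m j' :=
            mul_le_mul (hIb j' ω) (hAb j' ω) (abs_nonneg _) zero_le_one
      _ = m j' := one_mul _
    exact mul_le_mul h1 h2 (by positivity) (hm0 j)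
    -- expectations of hash indicators
  have hIi : ∀ ω, I i ω = 1 := by intro ω; rw [hIdef]; simp
  have hEI : ∀ j, j ≠ i → ∫ ω, I j ω ∂P = 1/b := by
    intro j hj; rw [hIdef]
    exact auxCH_E_ind_pair hb hHmeas hHunif hH2 i j hj
  have hEII : ∀ j j', ∫ ω, I j ω * I j' ω ∂P
      = (if j = i then (if j' = i then (1:ℝ) else 1/b)
         else if j' = i then 1/b else if j = j' then 1/b else 1/(b:ℝ)^2) := by
    intro j j'
    by_cases hji : j = i
    · have h1 : (fun ω => I j ω * I j' ω) = fun ω => I j' ω := by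
        funext ω; rw [hji, hIi ω, one_mul]
      rw [h1, if_pos hji]
      by_cases hj'i : j' = i
      · have h2 : (fun ω => I j' ω) = fun _ => (1:ℝ) := by
          funext ω; rw [hj'i]; exact hIi ω
        rw [h2, if_pos hj'i]; simp
      · rw [if_neg hj'i]; exact hEI j' hj'i
    · by_cases hj'i : j' = i
      · have h1 : (fun ω => I j ω * I j' ω) = fun ω => I j ω := by
          funext ω; rw [hj'i, hIi ω, mul_one]
        rw [h1, if_neg hji, if_pos hj'i]; exact hEI j hji
      · by_cases hjj' : j = j'
        · have h1 : (fun ω => I j ω * I j' ω) = fun ω => I j ω := by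
            funext ω; rw [← hjj']
            rcases hI01 j ω with h | h <;> rw [h] <;> ring
          rw [h1, if_neg hji, if_neg hj'i, if_pos hjj']; exact hEI j hji
        · rw [if_neg hji, if_neg hj'i, if_neg hjj']
          have h1 : (fun ω => I j ω * I j' ω)
              = fun ω => if H j ω = H i ω ∧ H j' ω = H i ω then (1:ℝ) else 0 := by
            funext ω; rw [hIdef]; dsimp only
            by_cases h1 : H j ω = H i ω <;> by_cases h2 : H j' ω = H i ω <;>
              simp [h1, h2]
          rw [h1]
          exact auxCH_E_ind_triple hb hHmeas hHunif hH3 i j j' hji hj'i hjj'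
  -- expectations on the α side
  have hEαα : ∀ u u', ∫ ω, α u ω * α u' ω ∂P = if u = u' then β else β^2 := by
    intro u u'
    by_cases huu : u = u'
    · subst huu
      have h1 : (fun ω => α u ω * α u ω) = fun ω => α u ω := by
        funext ω; rcases hα01 u ω with h | h <;> rw [h] <;> ring
      rw [h1, if_pos rfl]; exact hαmean u
    · rw [if_neg huu]
      have hind : IndepFun (α u) (α u') P := hαiid.indepFun huu
      have := hind.integral_fun_mul_eq_mul_integral (intα u).aestronglyMeasurable (intα u').aestronglyMeasurable
      calc ∫ ω, α u ω * α u' ω ∂P = (∫ ω, α u ω ∂P) * ∫ ω, α u' ω ∂P := this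
      _ = β^2 := by rw [hαmean u, hαmean u']; ring
  have hEA : ∀ j, ∫ ω, A j ω ∂P = m j * β := by
    intro j; rw [hAdef]; dsimp only
    rw [integral_finset_sum _ fun u _ => intα u]
    simp only [hαmean]
    rw [Finset.sum_const, hmdef, nsmul_eq_mul]
  have hEAA : ∀ j j', ∫ ω, A j ω * A j' ω ∂P
      = m j * m j' * β^2 + (if j = j' then m j * (β - β^2) else 0) := by
    intro j j'
    have h1 : (fun ω => A j ω * A j' ω)
        = fun ω => ∑ u ∈ U j, ∑ u' ∈ U j', α u ω * α u' ω := by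
      funext ω; rw [hAdef]; dsimp only; rw [Finset.sum_mul_sum]
    rw [h1, integral_finset_sum _ fun u _ =>
      integrable_finset_sum _ fun u' _ => intαα u u']
    have h2 : ∀ u ∈ U j, ∫ ω, ∑ u' ∈ U j', α u ω * α u' ω ∂P
        = ∑ u' ∈ U j', (if u = u' then β else β^2) := by
      intro u _
      rw [integral_finset_sum _ fun u' _ => intαα u u']
      exact Finset.sum_congr rfl fun u' _ => hEαα u u'
    rw [Finset.sum_congr rfl h2]
    by_cases hjj' : j = j'
    · subst hjj'
      rw [if_pos rfl]
      have h3 : ∀ u ∈ U j, ∑ u' ∈ U j, (if u = u' then β else β^2)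
          = ((U j).card : ℝ) * β^2 + (β - β^2) := by
        intro u hu
        have h4 : ∀ u' ∈ U j, (if u = u' then β else β^2)
            = β^2 + (if u = u' then β - β^2 else 0) := by
          intro u' _; split_ifs <;> ring
        rw [Finset.sum_congr rfl h4, Finset.sum_add_distrib, Finset.sum_const,
          Finset.sum_ite_eq (U j) u (fun _ => β - β^2), if_pos hu, nsmul_eq_mul]
      rw [Finset.sum_congr rfl h3, Finset.sum_const, nsmul_eq_mul, hmdef]
      ring
    · rw [if_neg hjj']
      have h3 : ∀ u ∈ U j, ∑ u' ∈ U j', (if u = u' then β else β^2)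
          = ((U j').card : ℝ) * β^2 := by
        intro u hu
        have h4 : ∀ u' ∈ U j', (if u = u' then β else β^2) = β^2 := by
          intro u' hu'
          rw [if_neg]
          intro he
          rw [hU] at hu hu'
          simp only [Finset.mem_filter, Finset.mem_univ, true_and] at hu hu'
          exact hjj' (hu ▸ he ▸ hu')
        rw [Finset.sum_congr rfl h4, Finset.sum_const, nsmul_eq_mul]
      rw [Finset.sum_congr rfl h3, Finset.sum_const, nsmul_eq_mul, hmdef]
      ring
    -- independence of α-side and H-side composites
  have hpairmeas : Measurable (fun ω => ((fun u => α u ω), (fun k => H k ω))) :=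
    Measurable.prod (measurable_pi_lambda _ fun u => hαmeas u)
      (measurable_pi_lambda _ fun k => hHmeas k)
  have hcross : ∀ (g : (Fin n → ℝ) → ℝ) (φ : (Fin d → Fin b) → ℝ), Measurable g →
      Integrable (fun ω => g (fun u => α u ω)) P →
      Integrable (fun ω => φ (fun k => H k ω)) P →
      ∫ ω, g (fun u => α u ω) * φ (fun k => H k ω) ∂P
        = (∫ ω, g (fun u => α u ω) ∂P) * ∫ ω, φ (fun k => H k ω) ∂P := by
    intro g φ hg hgi hφi
    have hi : IndepFun (fun ω => g (fun u => α u ω)) (fun ω => φ (fun k => H k ω)) P :=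
      hαH.comp hg (measurable_of_countable φ)
    exact hi.integral_fun_mul_eq_mul_integral hgi.aestronglyMeasurable hφi.aestronglyMeasurable
  -- E[X_j X_j'] factorizes
  have hEXX : ∀ j j', ∫ ω, (I j ω * A j ω) * (I j' ω * A j' ω) ∂P
      = (∫ ω, I j ω * I j' ω ∂P) * ∫ ω, A j ω * A j' ω ∂P := by
    intro j j'
    have h1 : (fun ω => (I j ω * A j ω) * (I j' ω * A j' ω))
        = fun ω => ((fun a : Fin n → ℝ => (∑ u ∈ U j, a u) * (∑ u ∈ U j', a u))
            (fun u => α u ω))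
          * ((fun h : Fin d → Fin b =>
              (if h j = h i then (1:ℝ) else 0) * (if h j' = h i then (1:ℝ) else 0))
            (fun k => H k ω)) := by
      funext ω; simp only [hIdef, hAdef]; ring
    have h2 : (fun ω : Ω => A j ω * A j' ω)
        = fun ω => (fun a : Fin n → ℝ => (∑ u ∈ U j, a u) * (∑ u ∈ U j', a u))
            (fun u => α u ω) := by
      funext ω; simp only [hAdef]
    have h3 : (fun ω : Ω => I j ω * I j' ω)
        = fun ω => (fun h : Fin d → Fin b =>
            (if h j = h i then (1:ℝ) else 0) * (if h j' = h i then (1:ℝ) else 0))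
          (fun k => H k ω) := by
      funext ω; simp only [hIdef]
    have hgmeas : Measurable (fun a : Fin n → ℝ => (∑ u ∈ U j, a u) * (∑ u ∈ U j', a u)) :=
      (Finset.measurable_sum _ fun u _ => measurable_pi_apply u).mul
        (Finset.measurable_sum _ fun u _ => measurable_pi_apply u)
    have := hcross (fun a : Fin n → ℝ => (∑ u ∈ U j, a u) * (∑ u ∈ U j', a u))
      (fun h : Fin d → Fin b =>
        (if h j = h i then (1:ℝ) else 0) * (if h j' = h i then (1:ℝ) else 0))
      hgmeas (by rw [← h2]; exact intAA j j') (by rw [← h3]; exact intII j j')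
    rw [h1, this, ← h2, ← h3, mul_comm]
  have intAj : ∀ j, Integrable (A j) P := fun j => auxCH_integrable_of_bdd (hAmeas j) (hAb j)
  have hEIval : ∀ j, ∫ ω, I j ω ∂P = if j = i then (1:ℝ) else 1/b := by
    intro j; by_cases hji : j = i
    · rw [if_pos hji]
      have h2 : (fun ω => I j ω) = fun _ => (1:ℝ) := by funext ω; rw [hji]; exact hIi ω
      rw [h2]; simp
    · rw [if_neg hji]; exact hEI j hji
  have hEX : ∀ j, ∫ ω, I j ω * A j ω ∂P = μX j := by
    intro j
    have h2 : (fun ω : Ω => A j ω)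
        = fun ω => (fun a : Fin n → ℝ => (∑ u ∈ U j, a u)) (fun u => α u ω) := by
      funext ω; simp only [hAdef]
    have h3 : (fun ω : Ω => I j ω)
        = fun ω => (fun h : Fin d → Fin b => (if h j = h i then (1:ℝ) else 0))
          (fun k => H k ω) := by
      funext ω; simp only [hIdef]
    have h1 : (fun ω => I j ω * A j ω)
        = fun ω => ((fun a : Fin n → ℝ => (∑ u ∈ U j, a u)) (fun u => α u ω))
          * ((fun h : Fin d → Fin b => (if h j = h i then (1:ℝ) else 0)) (fun k => H k ω)) := by
      funext ω; simp only [hIdef, hAdef]; ring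
    have hfac := hcross (fun a : Fin n → ℝ => (∑ u ∈ U j, a u))
      (fun h : Fin d → Fin b => (if h j = h i then (1:ℝ) else 0))
      (Finset.measurable_sum _ fun u _ => measurable_pi_apply u)
      (by rw [← h2]; exact intAj j) (by rw [← h3]; exact intI j)
    rw [h1, hfac, ← h2, ← h3, hEA j, hEIval j]
    simp only [hμXdef]
    by_cases hji : j = i
    · rw [if_pos hji, if_pos hji, mul_one]
    · rw [if_neg hji, if_neg hji]; ring
  -- Z machinery
  have hZsum : ∀ ω, Z ω = ∑ k, (if H i ω = k then (1:ℝ) else 0) * z k ω := by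
    intro ω; rw [hZdef]
    simp only [ite_mul, one_mul, zero_mul]
    rw [Finset.sum_ite_eq Finset.univ (H i ω) (fun k => z k ω)]
    simp
  have hindmeas : ∀ k : Fin b, Measurable (fun ω => if H i ω = k then (1:ℝ) else 0) :=
    fun k => Measurable.ite ((hHmeas i) (measurableSet_singleton k))
      measurable_const measurable_const
  have hindb : ∀ (k : Fin b) ω, |if H i ω = k then (1:ℝ) else 0| ≤ 1 := by
    intro k ω; split <;> norm_num
  have hEind : ∀ k : Fin b, ∫ ω, (if H i ω = k then (1:ℝ) else 0) ∂P = 1/b :=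
    fun k => auxCH_E_ind_val hHmeas hHunif i k
  have intZ : Integrable Z P := by
    rw [funext hZsum]
    exact integrable_finset_sum _ fun k _ =>
      (hzint k).bdd_mul (hindmeas k).aestronglyMeasurable
        (Filter.Eventually.of_forall fun ω => by simpa using hindb k ω)
  have intzsq : ∀ k, Integrable (fun ω => z k ω ^ 2) P := fun k => (hzL2 k).integrable_sq
  have hEzsq : ∀ k, ∫ ω, z k ω ^ 2 ∂P = σ2 + μ^2 := by
    intro k
    have h := variance_eq_sub (hzL2 k)
    rw [hzvar k] at h
    have h2 : P[z k ^ 2] = ∫ ω, z k ω ^ 2 ∂P := by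
      apply integral_congr_ae; filter_upwards with ω; simp [Pi.pow_apply]
    have h3 : P[z k] = μ := hzmean k
    rw [h2, h3] at h
    linarith
  have hZsq : ∀ ω, Z ω ^ 2 = ∑ k, (if H i ω = k then (1:ℝ) else 0) * z k ω ^ 2 := by
    intro ω; rw [hZdef]
    simp only [ite_mul, one_mul, zero_mul]
    rw [Finset.sum_ite_eq Finset.univ (H i ω) (fun k => z k ω ^ 2)]
    simp
  have intZsq : Integrable (fun ω => Z ω ^ 2) P := by
    rw [funext hZsq]
    exact integrable_finset_sum _ fun k _ =>
      (intzsq k).bdd_mul (hindmeas k).aestronglyMeasurable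
        (Filter.Eventually.of_forall fun ω => by simpa using hindb k ω)
  have hEZ2 : ∫ ω, Z ω ^ 2 ∂P = σ2 + μ^2 := by
    rw [funext hZsq, integral_finset_sum _ fun k _ =>
      (intzsq k).bdd_mul (hindmeas k).aestronglyMeasurable
        (Filter.Eventually.of_forall fun ω => by simpa using hindb k ω)]
    have hval : ∀ k : Fin b, ∫ ω, (if H i ω = k then (1:ℝ) else 0) * z k ω ^ 2 ∂P
        = (1/b) * (σ2 + μ^2) := by
      intro k
      have hz2ind : IndepFun (fun ω => z k ω ^ 2)
          (fun ω => if H i ω = k then (1:ℝ) else 0) P := by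
        have hm2 : Measurable (fun p : (Fin n → ℝ) × (Fin d → Fin b) =>
            if p.2 i = k then (1:ℝ) else 0) := by
          refine Measurable.ite ?_ measurable_const measurable_const
          exact measurable_snd (measurable_of_countable (fun h : Fin d → Fin b => h i)
            (measurableSet_singleton k))
        have := hzrest.comp (φ := fun vv : Fin b → ℝ => (vv k) ^ 2)
          ((measurable_pi_apply (X := fun _ : Fin b => ℝ) k).pow_const 2) hm2
        simpa [Function.comp_def] using this
      have hfac := hz2ind.symm.integral_fun_mul_eq_mul_integral
        (auxCH_integrable_of_bdd (hindmeas k) (hindb k)).aestronglyMeasurable (intzsq k).aestronglyMeasurable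
      calc ∫ ω, (if H i ω = k then (1:ℝ) else 0) * z k ω ^ 2 ∂P
          = (∫ ω, (if H i ω = k then (1:ℝ) else 0) ∂P) * ∫ ω, z k ω ^ 2 ∂P := hfac
      _ = (1/b) * (σ2 + μ^2) := by rw [hEind k, hEzsq k]
    rw [Finset.sum_congr rfl fun k _ => hval k, Finset.sum_const]
    simp only [Finset.card_univ, Fintype.card_fin, nsmul_eq_mul]
    field_simp
    -- E[G·Z] = μ E[G] for (α,H)-measurable bounded G
  have hZG : ∀ (Φ : (Fin n → ℝ) × (Fin d → Fin b) → ℝ) (CB : ℝ), Measurable Φ →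
      (∀ ω, |Φ ((fun u => α u ω), (fun k => H k ω))| ≤ CB) →
      ∫ ω, Φ ((fun u => α u ω), (fun k => H k ω)) * Z ω ∂P
        = μ * ∫ ω, Φ ((fun u => α u ω), (fun k => H k ω)) ∂P := by
    intro Φ CB hΦm hΦb
    set G : Ω → ℝ := fun ω => Φ ((fun u => α u ω), (fun k => H k ω)) with hGdef
    have hGmeas : Measurable G := hΦm.comp hpairmeas
    have hGind_meas : ∀ k : Fin b, Measurable (fun ω => G ω * (if H i ω = k then (1:ℝ) else 0)) :=
      fun k => hGmeas.mul (hindmeas k)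
    have hGind_b : ∀ (k : Fin b) ω, |G ω * (if H i ω = k then (1:ℝ) else 0)| ≤ |CB| := by
      intro k ω; rw [abs_mul]
      calc |G ω| * |if H i ω = k then (1:ℝ) else 0| ≤ |CB| * 1 :=
            mul_le_mul (le_trans (hΦb ω) (le_abs_self CB)) (hindb k ω)
              (abs_nonneg _) (abs_nonneg _)
      _ = |CB| := mul_one _
    have hintGind : ∀ k, Integrable (fun ω => G ω * (if H i ω = k then (1:ℝ) else 0)) P :=
      fun k => auxCH_integrable_of_bdd (hGind_meas k) (hGind_b k)
    have hintGiz : ∀ k : Fin b,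
        Integrable (fun ω => (G ω * (if H i ω = k then (1:ℝ) else 0)) * z k ω) P :=
      fun k => (hzint k).bdd_mul (hGind_meas k).aestronglyMeasurable
        (Filter.Eventually.of_forall fun ω => by simpa using hGind_b k ω)
    have hdec : (fun ω => G ω * Z ω)
        = fun ω => ∑ k, (G ω * (if H i ω = k then (1:ℝ) else 0)) * z k ω := by
      funext ω
      rw [hZsum ω, Finset.mul_sum]
      exact Finset.sum_congr rfl fun k _ => by ring
    rw [hdec, integral_finset_sum _ fun k _ => hintGiz k]
    have hval : ∀ k : Fin b, ∫ ω, (G ω * (if H i ω = k then (1:ℝ) else 0)) * z k ω ∂P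
        = μ * ∫ ω, G ω * (if H i ω = k then (1:ℝ) else 0) ∂P := by
      intro k
      have hzkind : IndepFun (z k) (fun ω => G ω * (if H i ω = k then (1:ℝ) else 0)) P := by
        have hm2 : Measurable (fun p : (Fin n → ℝ) × (Fin d → Fin b) =>
            Φ p * (if p.2 i = k then (1:ℝ) else 0)) :=
          hΦm.mul (Measurable.ite (measurable_snd
            (measurable_of_countable (fun h : Fin d → Fin b => h i)
              (measurableSet_singleton k))) measurable_const measurable_const)
        have := hzrest.comp (φ := fun vv : Fin b → ℝ => vv k) (measurable_pi_apply (X := fun _ : Fin b => ℝ) k) hm2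
        simpa [Function.comp_def, hGdef] using this
      calc ∫ ω, (G ω * (if H i ω = k then (1:ℝ) else 0)) * z k ω ∂P
          = (∫ ω, G ω * (if H i ω = k then (1:ℝ) else 0) ∂P) * ∫ ω, z k ω ∂P :=
            hzkind.symm.integral_fun_mul_eq_mul_integral (hintGind k).aestronglyMeasurable (hzint k).aestronglyMeasurable
      _ = μ * ∫ ω, G ω * (if H i ω = k then (1:ℝ) else 0) ∂P := by rw [hzmean k]; ring
    rw [Finset.sum_congr rfl fun k _ => hval k, ← Finset.mul_sum,
      ← integral_finset_sum _ fun k _ => hintGind k]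
    congr 1
    have hGsum : (fun ω => ∑ k, G ω * (if H i ω = k then (1:ℝ) else 0)) = G := by
      funext ω
      rw [← Finset.mul_sum]
      have : ∑ k, (if H i ω = k then (1:ℝ) else 0) = 1 := by
        rw [Finset.sum_ite_eq Finset.univ (H i ω) (fun _ => (1:ℝ))]; simp
      rw [this, mul_one]
    rw [hGsum]
  have hEZval : ∫ ω, Z ω ∂P = μ := by
    have := hZG (fun _ => (1:ℝ)) 1 measurable_const (by intro ω; norm_num)
    simpa using this
  have hESZ : ∫ ω, S ω * Z ω ∂P = μ * ∫ ω, S ω ∂P := by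
    have hSfun : S = fun ω => (fun p : (Fin n → ℝ) × (Fin d → Fin b) =>
        ∑ j, (if p.2 j = p.2 i then (1:ℝ) else 0) * (∑ u ∈ U j, p.1 u))
        ((fun u => α u ω), (fun k => H k ω)) := by
      funext ω; simp only [hSdef, hIdef, hAdef]
    have hΦm : Measurable (fun p : (Fin n → ℝ) × (Fin d → Fin b) =>
        ∑ j, (if p.2 j = p.2 i then (1:ℝ) else 0) * (∑ u ∈ U j, p.1 u)) := by
      refine Finset.measurable_sum _ fun j _ => Measurable.mul ?_ ?_
      · refine Measurable.ite ?_ measurable_const measurable_const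
        exact measurable_snd
          (measurable_of_countable (fun h : Fin d → Fin b => (h j, h i))
            ((Set.to_countable _).measurableSet (s := {q : Fin b × Fin b | q.1 = q.2})))
      · exact Finset.measurable_sum _ fun u _ => (measurable_pi_apply u).comp measurable_fst
    have hbd : ∀ ω, |(fun p : (Fin n → ℝ) × (Fin d → Fin b) =>
        ∑ j, (if p.2 j = p.2 i then (1:ℝ) else 0) * (∑ u ∈ U j, p.1 u))
        ((fun u => α u ω), (fun k => H k ω))| ≤ (n:ℝ) := by
      intro ω
      have h := hSb ω
      rw [hSfun] at h
      exact h
    have := hZG _ (n:ℝ) hΦm hbd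
    rw [hSfun]
    exact this
  have intSZ : Integrable (fun ω => S ω * Z ω) P :=
    intZ.bdd_mul hSmeas.aestronglyMeasurable (Filter.Eventually.of_forall fun ω => by simpa using hSb ω)
  have intX : ∀ j, Integrable (fun ω => I j ω * A j ω) P := by
    intro j
    refine auxCH_integrable_of_bdd ((hImeas j).mul (hAmeas j)) (Cst := m j) fun ω => ?_
    rw [abs_mul]
    calc |I j ω| * |A j ω| ≤ 1 * m j :=
          mul_le_mul (hIb j ω) (hAb j ω) (abs_nonneg _) zero_le_one
    _ = m j := one_mul _
  have hμXsum : ∑ j, μX j = m i * β + ((n:ℝ) - m i) * β / b := by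
    rw [← Finset.add_sum_erase Finset.univ μX (Finset.mem_univ i)]
    congr 1
    · simp [hμXdef]
    · have h1 : ∀ j ∈ Finset.univ.erase i, μX j = m j * β / b := by
        intro j hj
        have hji : j ≠ i := (Finset.mem_erase.mp hj).1
        simp only [hμXdef]; rw [if_neg hji]
      rw [Finset.sum_congr rfl h1, ← Finset.sum_div, ← Finset.sum_mul, herase]
  have hESval : ∫ ω, S ω ∂P = m i * β + ((n:ℝ) - m i) * β / b := by
    simp only [hSdef]
    rw [integral_finset_sum _ fun j _ => intX j, Finset.sum_congr rfl fun j _ => hEX j, hμXsum]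
  have hEterm : ∀ j j', ∫ ω, (I j ω * A j ω) * (I j' ω * A j' ω) ∂P
      = μX j * μX j' + (if j = j' then (if j = i then m j * (β - β^2) else v j) else 0) := by
    intro j j'
    rw [hEXX j j', hEII j j', hEAA j j']
    simp only [hμXdef, hvdef]
    by_cases h3 : j = j'
    · by_cases h1 : j = i
      · have h2 : j' = i := h3.symm.trans h1
        simp only [if_pos h1, if_pos h2, if_pos h3]
        rw [← h3]
        ring
      · have h2 : j' ≠ i := fun he => h1 (h3.trans he)
        simp only [if_neg h1, if_neg h2, if_pos h3]
        rw [← h3]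
        ring
    · by_cases h1 : j = i
      · have h2 : j' ≠ i := fun he => h3 (h1.trans he.symm)
        simp only [if_pos h1, if_neg h2, if_neg h3, add_zero]
        ring
      · by_cases h2 : j' = i
        · simp only [if_neg h1, if_pos h2, if_neg h3, add_zero]
          ring
        · simp only [if_neg h1, if_neg h2, if_neg h3, add_zero]
          ring
  have hdiagsum : ∑ j, (if j = i then m j * (β - β^2) else v j)
      = m i * (β - β^2) + ∑ j ∈ Finset.univ.erase i, v j := by
    rw [← Finset.add_sum_erase Finset.univ _ (Finset.mem_univ i), if_pos rfl]
    congr 1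
    refine Finset.sum_congr rfl fun j hj => ?_
    rw [if_neg (Finset.mem_erase.mp hj).1]
  have hQSval : ∫ ω, S ω * S ω ∂P
      = (m i * β + ((n:ℝ) - m i) * β / b)^2
        + (m i * (β - β^2) + ∑ j ∈ Finset.univ.erase i, v j) := by
    have h1 : (fun ω => S ω * S ω)
        = fun ω => ∑ j, ∑ j', (I j ω * A j ω) * (I j' ω * A j' ω) := by
      funext ω; simp only [hSdef]; rw [Finset.sum_mul_sum]
    rw [h1, integral_finset_sum _ fun j _ => integrable_finset_sum _ fun j' _ => intXX j j']
    rw [Finset.sum_congr rfl fun j _ => integral_finset_sum _ fun j' _ => intXX j j']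
    rw [Finset.sum_congr rfl fun j _ => Finset.sum_congr rfl fun j' _ => hEterm j j']
    have h2 : ∀ j : Fin d, ∑ j', (μX j * μX j'
        + (if j = j' then (if j = i then m j * (β - β^2) else v j) else 0))
        = μX j * (∑ j', μX j') + (if j = i then m j * (β - β^2) else v j) := by
      intro j
      rw [Finset.sum_add_distrib, ← Finset.mul_sum,
        Finset.sum_ite_eq Finset.univ j (fun _ => if j = i then m j * (β - β^2) else v j),
        if_pos (Finset.mem_univ j)]
    rw [Finset.sum_congr rfl fun j _ => h2 j, Finset.sum_add_distrib, ← Finset.sum_mul,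
      hμXsum, hdiagsum]
    ring
  -- pointwise expansion of the squared error
  have hcS : ∀ ω, c (H i ω) ω = S ω + Z ω := by
    intro ω
    rw [hc (H i ω) ω]
    congr 1
    rw [← Finset.sum_fiberwise_of_maps_to (g := x) (t := Finset.univ)
      (fun u _ => Finset.mem_univ (x u))
      (f := fun u => α u ω * (if H (x u) ω = H i ω then (1:ℝ) else 0))]
    simp only [hSdef]
    refine Finset.sum_congr rfl fun j _ => ?_
    have h5 : ∀ u ∈ Finset.univ.filter (fun a => x a = j),
        α u ω * (if H (x u) ω = H i ω then (1:ℝ) else 0) = α u ω * I j ω := by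
      intro u hu
      have hxu : x u = j := (Finset.mem_filter.mp hu).2
      rw [hIdef]
      simp only [hxu]
    rw [Finset.sum_congr rfl h5, ← Finset.sum_mul]
    simp only [hAdef, hU]
    ring
  have hpt : (fun ω => (fhat i ω - f i)^2) = fun ω =>
      C^2 * (S ω * S ω) + ((2*C^2) * (S ω * Z ω) + (C^2 * (Z ω ^ 2)
        + ((-(2*C*(C*κ + f i))) * S ω + ((-(2*C*(C*κ + f i))) * Z ω + (C*κ + f i)^2)))) := by
    funext ω
    rw [hfhat i ω, hcS ω, hCdef, hκdef]
    ring
  have i1 : Integrable (fun ω => C^2 * (S ω * S ω)) P := intS2.const_mul _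
  have i2 : Integrable (fun ω => (2*C^2) * (S ω * Z ω)) P := intSZ.const_mul _
  have i3 : Integrable (fun ω => C^2 * (Z ω ^ 2)) P := intZsq.const_mul _
  have i4 : Integrable (fun ω => (-(2*C*(C*κ + f i))) * S ω) P := intS.const_mul _
  have i5 : Integrable (fun ω => (-(2*C*(C*κ + f i))) * Z ω) P := intZ.const_mul _
  have i6 : Integrable (fun _ : Ω => (C*κ + f i)^2) P := integrable_const _
  have i56 : Integrable (fun ω => (-(2*C*(C*κ + f i))) * Z ω + (C*κ + f i)^2) P := i5.add i6
  have i456 : Integrable (fun ω => (-(2*C*(C*κ + f i))) * S ω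
      + ((-(2*C*(C*κ + f i))) * Z ω + (C*κ + f i)^2)) P := i4.add i56
  have i3456 : Integrable (fun ω => C^2 * (Z ω ^ 2) + ((-(2*C*(C*κ + f i))) * S ω
      + ((-(2*C*(C*κ + f i))) * Z ω + (C*κ + f i)^2))) P := i3.add i456
  have i23456 : Integrable (fun ω => (2*C^2) * (S ω * Z ω) + (C^2 * (Z ω ^ 2)
      + ((-(2*C*(C*κ + f i))) * S ω
        + ((-(2*C*(C*κ + f i))) * Z ω + (C*κ + f i)^2)))) P := i2.add i3456
  have E5 : ∫ ω, ((-(2*C*(C*κ + f i))) * Z ω + (C*κ + f i)^2) ∂P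
      = (-(2*C*(C*κ + f i))) * μ + (C*κ + f i)^2 := by
    rw [integral_add i5 i6, integral_const_mul, hEZval, integral_const]
    simp [measure_univ]
  have E4 : ∫ ω, ((-(2*C*(C*κ + f i))) * S ω
      + ((-(2*C*(C*κ + f i))) * Z ω + (C*κ + f i)^2)) ∂P
      = (-(2*C*(C*κ + f i))) * (m i * β + ((n:ℝ) - m i) * β / b)
        + ((-(2*C*(C*κ + f i))) * μ + (C*κ + f i)^2) := by
    rw [integral_add i4 i56, integral_const_mul, hESval, E5]
  have E3 : ∫ ω, (C^2 * (Z ω ^ 2) + ((-(2*C*(C*κ + f i))) * S ω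
      + ((-(2*C*(C*κ + f i))) * Z ω + (C*κ + f i)^2))) ∂P
      = C^2 * (σ2 + μ^2) + ((-(2*C*(C*κ + f i))) * (m i * β + ((n:ℝ) - m i) * β / b)
        + ((-(2*C*(C*κ + f i))) * μ + (C*κ + f i)^2)) := by
    rw [integral_add i3 i456, integral_const_mul, hEZ2, E4]
  have E2 : ∫ ω, ((2*C^2) * (S ω * Z ω) + (C^2 * (Z ω ^ 2)
      + ((-(2*C*(C*κ + f i))) * S ω
        + ((-(2*C*(C*κ + f i))) * Z ω + (C*κ + f i)^2)))) ∂P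
      = (2*C^2) * (μ * (m i * β + ((n:ℝ) - m i) * β / b))
        + (C^2 * (σ2 + μ^2) + ((-(2*C*(C*κ + f i))) * (m i * β + ((n:ℝ) - m i) * β / b)
        + ((-(2*C*(C*κ + f i))) * μ + (C*κ + f i)^2))) := by
    rw [integral_add i2 i3456, integral_const_mul, hESZ, hESval, E3]
  rw [hpt, integral_add i1 i23456, integral_const_mul, hQSval, E2]
  -- final algebra
  have hwv : ∑ j ∈ Finset.univ.erase i,
      (((n : ℝ)^2 * (f j)^2 * β^2 + n * f j * β * (1 - β)) * ((b : ℝ) - 1) / (b : ℝ)^2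
        + n * f j * β * (1 - β) / (b : ℝ)^2) = ∑ j ∈ Finset.univ.erase i, v j := by
    refine Finset.sum_congr rfl fun j _ => ?_
    rw [hfm j]
    simp only [hvdef]
    field_simp
    ring
  rw [hw, hwv, hfm i, hCdef, hκdef]
  field_simp
  ring
end

section
/- In the FME protocol, conditioned on item i being selected in the filtering step, the estimate is unbiased and has the stated variance: E[f̂_i] = f_i and Var[f̂_i] = f_i(1−β)/(nβ) + σ₂²/(n²β²), where f̂_i = (c̃_i − μ₂)/(nβ). -/
open MeasureTheory ProbabilityTheory

lemma variance_sub_const' {Ω : Type*} [MeasurableSpace Ω] {P : Measure Ω}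
    [IsProbabilityMeasure P] {X : Ω → ℝ} (hX : MemLp X 2 P) (c : ℝ) :
    variance (fun ω => X ω - c) P = variance X P := by
  have hXc : MemLp (fun ω => X ω - c) 2 P := hX.sub (memLp_const c)
  rw [variance_eq_sub hXc, variance_eq_sub hX]
  have h1 : ∫ ω, (fun ω => X ω - c) ω ∂P = (∫ ω, X ω ∂P) - c := by
    rw [integral_sub (hX.integrable one_le_two) (integrable_const c)]
    simp
  have h2 : ∫ ω, ((fun ω => X ω - c) ^ 2) ω ∂P
      = (∫ ω, (X ^ 2) ω ∂P) - 2 * c * (∫ ω, X ω ∂P) + c ^ 2 := by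
    have : ∀ ω, ((fun ω => X ω - c) ^ 2) ω = (X ^ 2) ω - 2 * c * X ω + c ^ 2 := by
      intro ω; simp [Pi.pow_apply]; ring
    rw [integral_congr_ae (Filter.Eventually.of_forall this)]
    simp only [Pi.pow_apply]
    rw [integral_add (by exact ((hX.integrable_sq).sub ((hX.integrable one_le_two).const_mul _))) (integrable_const _),
      integral_sub hX.integrable_sq ((hX.integrable one_le_two).const_mul _)]
    rw [integral_const_mul]
    simp
  simp only [Pi.pow_apply] at h2 ⊢
  rw [h1, h2]; ring

/-- In the FME protocol, conditioned on item `i` being selected in the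
filtering step, the estimate is unbiased and has the stated variance:
`E[f̂ i] = f i` and `Var[f̂ i] = f_i(1−β)/(nβ) + σ₂²/(n²β²)`,
where `f̂ i = (c̃ i − μ₂)/(nβ)`, `c̃ i = Σ_{j=1}^m α_j + z` and `f_i = m/n`. -/
theorem fme_estimator_unbiased_and_variance
    {Ω : Type*} [MeasurableSpace Ω] (P : Measure Ω) [IsProbabilityMeasure P]
    -- n users in total, m = n·f_i of whom hold item i
    (n m : ℕ) (hn : 1 ≤ n) (hmn : m ≤ n)
    (β : ℝ) (hβ0 : 0 < β) (hβ1 : β ≤ 1)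
    (μ2 σ2 : ℝ)
    -- i.i.d. Bernoulli(β) sampling indicators
    (α : Fin m → Ω → ℝ)
    (hαmeas : ∀ j, Measurable (α j))
    (hα01 : ∀ j ω, α j ω = 0 ∨ α j ω = 1)
    (hαmean : ∀ j, ∫ ω, α j ω ∂P = β)
    (hαiid : iIndepFun α P)
    (hαident : ∀ j j', IdentDistrib (α j) (α j') P P)
    -- nonnegative-integer-valued dummy count with mean μ₂ and variance σ₂²,
    -- independent of the sampling indicators
    (z : Ω → ℝ)
    (hzmeas : Measurable z)
    (hzNat : ∀ ω, ∃ k : ℕ, z ω = k)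
    (hzL2 : MemLp z 2 P)
    (hzmean : ∫ ω, z ω ∂P = μ2)
    (hzvar : variance z P = σ2)
    (hzα : IndepFun z (fun ω (j : Fin m) => α j ω) P)
    -- estimator: f̂_i = (c̃_i − μ₂)/(nβ) with c̃_i = Σ_j α_j + z
    (fhat : Ω → ℝ)
    (hfhat : ∀ ω, fhat ω = ((∑ j, α j ω) + z ω - μ2) / (n * β)) :
    (∫ ω, fhat ω ∂P = (m : ℝ) / n) ∧
      variance fhat P
        = ((m : ℝ) / n) * (1 - β) / (n * β) + σ2 / ((n : ℝ)^2 * β^2) := by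
  have hn0 : (0:ℝ) < n := by exact_mod_cast hn
  have hnβ : (n:ℝ) * β ≠ 0 := by positivity
  -- α j is in L².
  have hαL2 : ∀ j, MemLp (α j) 2 P := by
    intro j
    apply MemLp.of_bound ((hαmeas j).aestronglyMeasurable) 1
    filter_upwards with ω
    rcases hα01 j ω with h | h <;> simp [h]
  -- S := sum of α's
  set S : Ω → ℝ := fun ω => ∑ j, α j ω with hS
  have hSL2 : MemLp S 2 P := by
    have := memLp_finset_sum (Finset.univ : Finset (Fin m)) (fun j _ => hαL2 j)
    convert this using 1
  have hSint : Integrable S P := hSL2.integrable one_le_two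
  have hSmean : ∫ ω, S ω ∂P = m * β := by
    rw [hS]
    rw [integral_finset_sum _ (fun j _ => (hαL2 j).integrable one_le_two)]
    simp [hαmean]
  -- variance of each α j
  have hαvar : ∀ j, variance (α j) P = β - β ^ 2 := by
    intro j
    rw [variance_eq_sub (hαL2 j)]
    have hsq : ∀ ω, ((α j) ^ 2) ω = α j ω := by
      intro ω; rcases hα01 j ω with h | h <;> simp [h]
    rw [integral_congr_ae (Filter.Eventually.of_forall hsq), hαmean j]
  -- variance of S
  have hSvar : variance S P = m * (β - β ^ 2) := by
    have h := (IndepFun.variance_sum (μ := P) (X := α) (s := Finset.univ)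
      (fun j _ => hαL2 j) (fun j _ j' _ hjj' => hαiid.indepFun hjj'))
    have : variance S P = ∑ j : Fin m, variance (α j) P := by
      convert h using 2
      ext ω; simp [hS]
    rw [this]
    simp [hαvar]
    ring
  -- independence of S and z
  have hzS : IndepFun z S P := by
    have hmeas_sum : Measurable (fun v : Fin m → ℝ => ∑ j, v j) := by
      exact Finset.measurable_sum _ (fun j _ => measurable_pi_apply j)
    have := hzα.comp measurable_id hmeas_sum
    exact this
  have hSz : IndepFun S z P := hzS.symm
  -- key: fhat = (1/(nβ)) * ((S+z) - μ2)
  have hfhat' : fhat = fun ω => ((n:ℝ) * β)⁻¹ * ((S ω + z ω) - μ2) := by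
    funext ω; rw [hfhat ω]; field_simp
    rfl
  have hSzL2 : MemLp (fun ω => S ω + z ω) 2 P := hSL2.add hzL2
  constructor
  · rw [hfhat']
    have hi : Integrable (fun a => S a + z a) P := hSint.add (hzL2.integrable one_le_two)
    rw [integral_const_mul, integral_sub hi (integrable_const _),
      integral_add hSint (hzL2.integrable one_le_two), hSmean, hzmean]
    simp only [integral_const, measure_univ, ENNReal.toReal_one, one_smul, smul_eq_mul, probReal_univ]
    field_simp
    ring
  · rw [hfhat']
    rw [variance_const_mul]
    have hvadd : variance (fun ω => (S ω + z ω) - μ2) P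
        = variance (fun ω => S ω + z ω) P := variance_sub_const' hSzL2 μ2
    rw [hvadd]
    have : variance (fun ω => S ω + z ω) P = variance S P + variance z P := by
      have := hSz.variance_add hSL2 hzL2
      convert this using 2
      rfl
    rw [this, hSvar, hzvar]
    have hβ0' : β ≠ 0 := ne_of_gt hβ0
    have hn0' : (n:ℝ) ≠ 0 := ne_of_gt hn0
    field_simp
end

section
/- In the KV protocol, conditioned on key i being selected in the filtering step, the frequency estimate is unbiased with the stated variance: E[Φ̂_i] = Φ_i and Var[Φ̂_i] = Φ_i·(κ−β)/(nβ) + 2κ²σ₂²/(n²β²), where Φ̂_i = (κ/(nβ))·(X + z₁ + z₂ − 2μ₂). -/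
open MeasureTheory ProbabilityTheory

lemma variance_add_const'' {Ω : Type*} [MeasurableSpace Ω] {P : Measure Ω}
    [IsProbabilityMeasure P] {f : Ω → ℝ} (hf : MemLp f 2 P) (c : ℝ) :
    variance (fun ω => f ω + c) P = variance f P := by
  have hfc : MemLp (fun ω => f ω + c) 2 P := hf.add (memLp_const c)
  rw [variance_eq_integral hfc.aemeasurable, variance_eq_integral hf.aemeasurable]
  have h1 : ∫ ω, (f ω + c) ∂P = (∫ ω, f ω ∂P) + c := by
    rw [integral_add (hf.integrable one_le_two) (integrable_const c), integral_const]
    simp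
  congr 1
  funext ω
  simp only [Pi.pow_apply, Pi.sub_apply, h1]
  ring


/-- In the KV protocol, conditioned on key `i` being selected in the
filtering step, the frequency estimate is unbiased with the stated variance:
`E[Φ̂ i] = Φ i` and `Var[Φ̂ i] = Φ_i·(κ−β)/(nβ) + 2κ²σ₂²/(n²β²)`, where
`Φ̂ i = (κ/(nβ))·(X + z₁ + z₂ − 2μ₂)`, `X = Σ_{j=1}^m X_j` and `Φ_i = m/n`. -/
theorem kv_frequency_estimator_unbiased_and_variance
    {Ω : Type*} [MeasurableSpace Ω] (P : Measure Ω) [IsProbabilityMeasure P]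
    -- n users in total, m = n·Φ_i of whom hold key i; padding length κ
    (n m κ : ℕ) (hn : 1 ≤ n) (hmn : m ≤ n) (hκ : 1 ≤ κ)
    (β : ℝ) (hβ0 : 0 < β) (hβ1 : β ≤ 1)
    (μ2 σ2 : ℝ)
    -- i.i.d. Bernoulli(β/κ) survival indicators
    (X : Fin m → Ω → ℝ)
    (hXmeas : ∀ j, Measurable (X j))
    (hX01 : ∀ j ω, X j ω = 0 ∨ X j ω = 1)
    (hXmean : ∀ j, ∫ ω, X j ω ∂P = β / κ)
    (hXiid : iIndepFun X P)
    (hXident : ∀ j j', IdentDistrib (X j) (X j') P P)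
    -- nonnegative-integer-valued dummy counts, each with mean μ₂ and variance σ₂²
    (z1 z2 : Ω → ℝ)
    (hz1meas : Measurable z1) (hz2meas : Measurable z2)
    (hz1Nat : ∀ ω, ∃ k : ℕ, z1 ω = k) (hz2Nat : ∀ ω, ∃ k : ℕ, z2 ω = k)
    (hz1L2 : MemLp z1 2 P) (hz2L2 : MemLp z2 2 P)
    (hz1mean : ∫ ω, z1 ω ∂P = μ2) (hz2mean : ∫ ω, z2 ω ∂P = μ2)
    (hz1var : variance z1 P = σ2) (hz2var : variance z2 P = σ2)
    -- X, z₁, z₂ mutually independent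
    (hmut : iIndepFun
      ![fun ω => ∑ j, X j ω, z1, z2] P)
    -- frequency estimate: Φ̂_i = (κ/(nβ))·(X + z₁ + z₂ − 2μ₂)
    (Phat : Ω → ℝ)
    (hPhat : ∀ ω, Phat ω
      = ((κ : ℝ) / (n * β)) * ((∑ j, X j ω) + z1 ω + z2 ω - 2 * μ2)) :
    (∫ ω, Phat ω ∂P = (m : ℝ) / n) ∧
      variance Phat P
        = ((m : ℝ) / n) * ((κ : ℝ) - β) / (n * β)
            + 2 * (κ : ℝ)^2 * σ2 / ((n : ℝ)^2 * β^2) := by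
  
  classical
  have hn0 : (n:ℝ) ≠ 0 := by positivity
  have hκ0 : (κ:ℝ) ≠ 0 := by positivity
  have hβ0' : β ≠ 0 := ne_of_gt hβ0
  set c : ℝ := (κ:ℝ) / (n * β) with hc
  set p : ℝ := β / κ with hp
  set S : Ω → ℝ := fun ω => ∑ j, X j ω with hS
  -- each X j is in L² and integrable
  have hXL2 : ∀ j, MemLp (X j) 2 P := by
    intro j
    apply memLp_of_bounded (a := 0) (b := 1) (ae_of_all _ fun ω => ?_)
      (hXmeas j).aestronglyMeasurable 2
    rcases hX01 j ω with h | h <;> simp [h]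
  have hXint : ∀ j, Integrable (X j) P := fun j => (hXL2 j).integrable one_le_two
  have hSL2 : MemLp S 2 P := by
    have h1 := memLp_finset_sum' (μ := P) Finset.univ (fun j (_ : j ∈ Finset.univ) => hXL2 j)
    have h2 : (∑ j : Fin m, X j) = S := by funext ω; simp [S]
    rwa [h2] at h1
  have hSint : Integrable S P := hSL2.integrable one_le_two
  have hz1int : Integrable z1 P := hz1L2.integrable one_le_two
  have hz2int : Integrable z2 P := hz2L2.integrable one_le_two
  -- mean of S
  have hSmean : ∫ ω, S ω ∂P = m * p := by
    have : ∫ ω, S ω ∂P = ∑ j : Fin m, ∫ ω, X j ω ∂P := by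
      simpa [S] using integral_finset_sum Finset.univ (fun j _ => hXint j)
    simp [this, hXmean, hp]
  -- variance of each X j : p - p^2
  have hXsq : ∀ j, (fun ω => X j ω ^ 2) = X j := by
    intro j; funext ω; rcases hX01 j ω with h | h <;> simp [h]
  have hXvar : ∀ j, variance (X j) P = p - p ^ 2 := by
    intro j
    rw [variance_eq_sub (hXL2 j)]
    have h2 : ∫ x, X j x ^ 2 ∂P = p := by
      rw [← hXmean j]
      congr 1
      funext x
      rcases hX01 j x with h | h <;> simp [h]
    simp only [Pi.pow_apply]
    rw [show (P[fun x => X j x ^ 2] : ℝ) = ∫ x, X j x ^ 2 ∂P from rfl, h2, hXmean j]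
  -- variance of S
  have hSvar : variance S P = m * (p - p ^ 2) := by
    have hpair : Set.Pairwise ↑(Finset.univ : Finset (Fin m))
        fun i j => IndepFun (X i) (X j) P :=
      fun i _ j _ hij => hXiid.indepFun hij
    have := IndepFun.variance_sum (μ := P)
      (fun j (_ : j ∈ Finset.univ) => hXL2 j) hpair
    have hsum : (∑ j : Fin m, X j) = S := by funext ω; simp [S]
    rw [hsum] at this
    simp [this, hXvar]
    ring
  -- variance of W = S + z1 + z2
  set W : Ω → ℝ := fun ω => S ω + z1 ω + z2 ω with hW
  have hWL2 : MemLp W 2 P := (hSL2.add hz1L2).add hz2L2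
  have hYL2 : ∀ i : Fin 3, MemLp (![S, z1, z2] i) 2 P := by
    intro i; fin_cases i <;> simpa [S] using (by first | exact hSL2 | exact hz1L2 | exact hz2L2)
  have hWvar : variance W P = variance S P + σ2 + σ2 := by
    have hpair : Set.Pairwise ↑(Finset.univ : Finset (Fin 3))
        fun i j => IndepFun (![S, z1, z2] i) (![S, z1, z2] j) P := by
      intro i _ j _ hij
      have := hmut.indepFun hij
      simpa [S] using this
    have hL2 : ∀ i ∈ (Finset.univ : Finset (Fin 3)), MemLp (![S, z1, z2] i) 2 P :=
      fun i _ => hYL2 i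
    have h := IndepFun.variance_sum (μ := P) hL2 hpair
    have hsum : (∑ i : Fin 3, ![S, z1, z2] i) = W := by
      funext ω
      simp [Fin.sum_univ_three, W]
    rw [hsum] at h
    rw [h, Fin.sum_univ_three]
    simp [hz1var, hz2var]
  -- mean of Phat
  have hWmean : ∫ ω, W ω ∂P = m * p + μ2 + μ2 := by
    have h1 := integral_add (μ := P) (hSint.add hz1int) hz2int
    simp only [Pi.add_apply] at h1
    have h2 := integral_add (μ := P) hSint hz1int
    show ∫ ω, (S ω + z1 ω + z2 ω) ∂P = _
    rw [h1, h2, hSmean, hz1mean, hz2mean]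
  have hWint : Integrable W P := by
    have h1 := (hSint.add hz1int).add hz2int
    exact h1
  have hmean : ∫ ω, Phat ω ∂P = (m:ℝ) / n := by
    have hPhat' : Phat = fun ω => c * (W ω - 2 * μ2) := by
      funext ω; rw [hPhat ω, hW]
    rw [hPhat', integral_const_mul, integral_sub hWint (integrable_const _),
      integral_const, hWmean]
    simp only [measure_univ, probReal_univ, ENNReal.toReal_one, smul_eq_mul, one_mul]
    rw [hc, hp]
    field_simp
    ring
  refine ⟨hmean, ?_⟩
  -- variance of Phat
  have hPhat' : Phat = fun ω => (fun ω => c * W ω) ω + (- (c * (2 * μ2))) := by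
    funext ω; rw [hPhat ω]; ring
  have hcWL2 : MemLp (fun ω => c * W ω) 2 P := hWL2.const_mul c
  rw [hPhat', variance_add_const'' hcWL2]
  have : (fun ω => c * W ω) = c • W := by funext ω; simp [Pi.smul_apply, smul_eq_mul]
  rw [this, variance_smul, hWvar, hSvar, hc, hp]
  field_simp
  ring
end

section
/- Hypothesis-testing characterization of (ε,δ)-DP (Theorem 15): a mechanism M provides (ε,δ)-DP if and only if for every pair of neighboring databases D, D' and every measurable rejection region A, the type I and type II error probabilities p_I = P[M(D) ∈ A] and p_II = P[M(D') ∈ Aᶜ] satisfy both p_I + e^ε·p_II ≥ 1 − δ and e^ε·p_I + p_II ≥ 1 − δ. -/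
/-- Two databases (tuples of length `n`) are neighboring if they differ in at most one
entry. -/
def Neighboring {α : Type*} {n : ℕ} (D D' : Fin n → α) : Prop :=
  ∃ i, ∀ j, j ≠ i → D j = D' j

lemma Neighboring.symm {α : Type*} {n : ℕ} {D D' : Fin n → α}
    (h : Neighboring D D') : Neighboring D' D := by
  obtain ⟨i, hi⟩ := h
  exact ⟨i, fun j hj => (hi j hj).symm⟩

lemma compl_toReal {O : Type*} [MeasurableSpace O] (μ : MeasureTheory.Measure O)
    [MeasureTheory.IsProbabilityMeasure μ] {A : Set O} (hA : MeasurableSet A) :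
    (μ Aᶜ).toReal = 1 - (μ A).toReal := by
  rw [MeasureTheory.measure_compl hA (MeasureTheory.measure_ne_top μ A),
    MeasureTheory.measure_univ,
    ENNReal.toReal_sub_of_le MeasureTheory.prob_le_one (by simp)]
  simp

/-- Hypothesis-testing characterization of `(ε,δ)`-DP (Theorem 15):
a mechanism `M` provides `(ε,δ)`-DP if and only if for every pair of neighboring databases
`D, D'` and every measurable rejection region `A`, the type I and type II error
probabilities `p_I = P[M(D) ∈ A]` and `p_II = P[M(D') ∈ Aᶜ]` satisfy both
`p_I + e^ε·p_II ≥ 1 − δ` and `e^ε·p_I + p_II ≥ 1 − δ`. -/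
theorem dp_iff_hypothesis_testing
    {X O : Type*} [MeasurableSpace O]
    (n : ℕ) (ε δ : ℝ) (hε : 0 ≤ ε) (hδ0 : 0 ≤ δ) (hδ1 : δ ≤ 1)
    (M : (Fin n → X) → MeasureTheory.Measure O)
    (hprob : ∀ D, MeasureTheory.IsProbabilityMeasure (M D)) :
    (∀ D D' : Fin n → X, Neighboring D D' → ∀ S : Set O, MeasurableSet S →
        (M D S).toReal ≤ Real.exp ε * (M D' S).toReal + δ)
    ↔ (∀ D D' : Fin n → X, Neighboring D D' → ∀ A : Set O, MeasurableSet A →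
        1 - δ ≤ (M D A).toReal + Real.exp ε * (M D' Aᶜ).toReal
        ∧ 1 - δ ≤ Real.exp ε * (M D A).toReal + (M D' Aᶜ).toReal) := by
  have hc : ∀ D (A : Set O), MeasurableSet A → ((M D) Aᶜ).toReal = 1 - ((M D) A).toReal :=
    fun D A hA => @compl_toReal _ _ (M D) (hprob D) A hA
  constructor
  · intro hDP D D' hN A hA
    constructor
    · have h1 := hDP D D' hN Aᶜ hA.compl
      rw [hc D A hA] at h1
      linarith
    · have h2 := hDP D' D hN.symm A hA
      rw [hc D' A hA] at *
      linarith
  · intro hHT D D' hN S hS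
    have h := (hHT D D' hN Sᶜ hS.compl).1
    rw [compl_compl S, hc D S hS] at h
    linarith
end

section
/- The group-dependent hash (GH) estimator is unbiased: for every item i ∈ {1,…,d}, E[f̂_i] = f_i, where f̂_i = b/(nβ(b−1)) · ( Σ_{r=1}^g c̃_{r,H_r(i)} − nβ/b − gμ ). -/
open MeasureTheory ProbabilityTheory

lemma measurableSet_eq_fin {A : Type*} [MeasurableSpace A] {b : ℕ}
    {f g : A → Fin b} (hf : Measurable f) (hg : Measurable g) :
    MeasurableSet {v | f v = g v} := by
  have h : {v | f v = g v} = ⋃ k, f ⁻¹' {k} ∩ g ⁻¹' {k} := by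
    ext v
    simp only [Set.mem_setOf_eq, Set.mem_iUnion, Set.mem_inter_iff, Set.mem_preimage,
      Set.mem_singleton_iff]
    exact ⟨fun h => ⟨g v, h, rfl⟩, fun ⟨k, h1, h2⟩ => h1.trans h2.symm⟩
  rw [h]
  exact MeasurableSet.iUnion fun k =>
    (hf (measurableSet_singleton k)).inter (hg (measurableSet_singleton k))

lemma sum_ind_eq {b : ℕ} (u w : Fin b) :
    ∑ v : Fin b, (if u = v then (1:ℝ) else 0) * (if w = v then 1 else 0)
      = if u = w then 1 else 0 := by
  rw [Finset.sum_eq_single w]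
  · simp
  · intro v _ hv
    simp [Ne.symm hv]
  · simp

lemma integral_ind_eq {Ω : Type*} [MeasurableSpace Ω] (P : Measure Ω) [IsProbabilityMeasure P]
    {b : ℕ} {X : Ω → Fin b} (hX : Measurable X) (v : Fin b) :
    ∫ ω, (if X ω = v then (1:ℝ) else 0) ∂P = (P (X ⁻¹' {v})).toReal := by
  have h : (fun ω => if X ω = v then (1:ℝ) else 0)
      = (X ⁻¹' {v}).indicator (1 : Ω → ℝ) := by
    funext ω
    by_cases hω : X ω = v <;> simp [Set.indicator_apply, hω]
  rw [h, integral_indicator_one (hX (measurableSet_singleton v)), measureReal_def]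




/-- The group-dependent hash (GH) estimator is unbiased: for every item
`i`, `E[f̂ i] = f i`, where
`f̂ i = b/(nβ(b−1)) · (Σ_{r=1}^g c̃_{r,H_r(i)} − nβ/b − gμ)`. -/
theorem gh_estimator_unbiased
    {Ω : Type*} [MeasurableSpace Ω] (P : Measure Ω) [IsProbabilityMeasure P]
    -- numbers of users, items, hash range, groups
    (n d b g : ℕ) (hn : 1 ≤ n) (hd : 1 ≤ d) (hb : 2 ≤ b) (hg : 1 ≤ g)
    -- sampling probability and dummy-count mean
    (β : ℝ) (hβ0 : 0 < β) (hβ1 : β ≤ 1) (μ : ℝ)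
    -- users' items and the fixed group assignment
    (x : Fin n → Fin d) (grp : Fin n → Fin g)
    -- per-group random hash values, sampling indicators, per-group dummy counts
    (H : Fin g → Fin d → Ω → Fin b) (α : Fin n → Ω → ℝ) (z : Fin g → Fin b → Ω → ℝ)
    (hHmeas : ∀ r k, Measurable (H r k))
    (hαmeas : ∀ j, Measurable (α j))
    (hzmeas : ∀ r k, Measurable (z r k))
    -- within each group, hash values are pairwise independent with uniform marginals
    (hHunif : ∀ r k v, P (H r k ⁻¹' {v}) = 1 / b)
    (hHpair : ∀ r k k', k ≠ k' → IndepFun (H r k) (H r k') P)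
    -- the hash families are independent across groups
    (hHgroups : iIndepFun
      (fun r : Fin g => fun ω => fun k : Fin d => H r k ω) P)
    -- i.i.d. Bernoulli(β) sampling indicators, independent of all hashes
    (hα01 : ∀ j ω, α j ω = 0 ∨ α j ω = 1)
    (hαmean : ∀ j, ∫ ω, α j ω ∂P = β)
    (hαiid : iIndepFun α P)
    (hαident : ∀ j j', IdentDistrib (α j) (α j') P P)
    (hαH : IndepFun (fun ω (j : Fin n) => α j ω)
      (fun ω (rk : Fin g × Fin d) => H rk.1 rk.2 ω) P)
    -- i.i.d. nonnegative-integer-valued dummy counts with mean μ,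
    -- independent of everything else
    (hzNat : ∀ r k ω, ∃ mval : ℕ, z r k ω = mval)
    (hzint : ∀ r k, Integrable (z r k) P)
    (hzmean : ∀ r k, ∫ ω, z r k ω ∂P = μ)
    (hziid : iIndepFun
      (fun rk : Fin g × Fin b => z rk.1 rk.2) P)
    (hzident : ∀ r k r' k', IdentDistrib (z r k) (z r' k') P P)
    (hzrest : IndepFun (fun ω (rk : Fin g × Fin b) => z rk.1 rk.2 ω)
      (fun ω => ((fun j : Fin n => α j ω),
                 (fun rk : Fin g × Fin d => H rk.1 rk.2 ω))) P)
    -- counts: c̃_{r,k} = Σ_{j : r(j) = r} α_j · 1{H_r(x_j) = k} + z_{r,k}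
    (c : Fin g → Fin b → Ω → ℝ)
    (hc : ∀ r k ω, c r k ω
      = (∑ j ∈ Finset.univ.filter (fun j => grp j = r),
          α j ω * (if H r (x j) ω = k then 1 else 0)) + z r k ω)
    -- estimator: f̂_i = b/(nβ(b−1)) · (Σ_r c̃_{r,H_r(i)} − nβ/b − gμ)
    (fhat : Fin d → Ω → ℝ)
    (hfhat : ∀ i ω, fhat i ω = ((b : ℝ) / (n * β * ((b : ℝ) - 1)))
      * ((∑ r, c r (H r i ω) ω) - n * β / b - g * μ))
    -- relative frequencies: f_i = (1/n)·#{j : x_j = i}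
    (f : Fin d → ℝ)
    (hf : ∀ i, f i = ((Finset.univ.filter fun j => x j = i).card : ℝ) / n)
    (i : Fin d) :
    ∫ ω, fhat i ω ∂P = f i  := by
  classical
  have hb0 : (b : ℝ) ≠ 0 := by positivity
  have hbR : (1:ℝ) < (b:ℝ) := by exact_mod_cast hb
  have hb1 : (b:ℝ) - 1 ≠ 0 := by linarith
  have hn0 : (n : ℝ) ≠ 0 := by positivity
  set C : ℝ := (b : ℝ) / (n * β * ((b : ℝ) - 1)) with hCdef
  set ind : Fin n → Ω → ℝ :=
    fun j ω => if H (grp j) (x j) ω = H (grp j) i ω then 1 else 0 with hind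
  set S : Ω → ℝ := fun ω => ∑ j, α j ω * ind j ω with hS
  set T : Ω → ℝ := fun ω => ∑ r, z r (H r i ω) ω with hT
  -- measurability of simple indicators
  have hImeas : ∀ r k (v : Fin b), Measurable (fun ω => if H r k ω = v then (1:ℝ) else 0) :=
    fun r k v => Measurable.ite (hHmeas r k (measurableSet_singleton v))
      measurable_const measurable_const
  have hindmeas : ∀ j, Measurable (ind j) := fun j =>
    Measurable.ite (measurableSet_eq_fin (hHmeas _ _) (hHmeas _ _))
      measurable_const measurable_const
  -- pointwise rewriting of the estimator
  have hpoint : ∀ ω, fhat i ω = C * (S ω + T ω - (n * β / b + g * μ)) := by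
    intro ω
    rw [hfhat i ω]
    have hsum : (∑ r, c r (H r i ω) ω) = S ω + T ω := by
      simp only [hc]
      rw [Finset.sum_add_distrib]
      have h1 : (∑ r, ∑ j ∈ Finset.univ.filter (fun j => grp j = r),
          α j ω * if H r (x j) ω = H r i ω then 1 else 0) = S ω := by
        show _ = ∑ j, α j ω * ind j ω
        rw [← Finset.sum_fiberwise (Finset.univ) grp (fun j => α j ω * ind j ω)]
        refine Finset.sum_congr rfl fun r _ => Finset.sum_congr rfl fun j hj => ?_
        rw [Finset.mem_filter] at hj
        simp only [hind]
        rw [hj.2]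
      rw [h1]
    rw [hsum]
    ring
  -- integrability of the α-terms
  have hint1 : ∀ j, Integrable (fun ω => α j ω * ind j ω) P := by
    intro j
    refine Integrable.mono' (integrable_const (1:ℝ))
      (((hαmeas j).mul (hindmeas j)).aestronglyMeasurable) (ae_of_all _ fun ω => ?_)
    have h1 : ‖α j ω‖ ≤ 1 := by rcases hα01 j ω with h | h <;> simp [h]
    have h2 : ‖ind j ω‖ ≤ 1 := by
      simp only [hind]
      split <;> simp
    calc ‖α j ω * ind j ω‖ = ‖α j ω‖ * ‖ind j ω‖ := norm_mul _ _
      _ ≤ 1 := by nlinarith [norm_nonneg (α j ω), norm_nonneg (ind j ω)]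
  -- rewriting z ∘ hash as a sum over hash values
  have hzrw : ∀ r, (fun ω => z r (H r i ω) ω)
      = fun ω => ∑ k, (if H r i ω = k then (1:ℝ) else 0) * z r k ω := by
    intro r; funext ω
    simp [ite_mul, Finset.sum_ite_eq]
  have hint2k : ∀ r k, Integrable (fun ω => (if H r i ω = k then (1:ℝ) else 0) * z r k ω) P := by
    intro r k
    exact Integrable.bdd_mul (hzint r k) (hImeas r i k).aestronglyMeasurable
      (c := 1) (ae_of_all _ fun ω => by by_cases h : H r i ω = k <;> simp [h])
  have hint2 : ∀ r, Integrable (fun ω => z r (H r i ω) ω) P := by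
    intro r
    rw [hzrw r]
    exact integrable_finset_sum _ fun k _ => hint2k r k
  -- expectations of simple indicators
  have hunifR : ∀ r k (v : Fin b), ∫ ω, (if H r k ω = v then (1:ℝ) else 0) ∂P = 1 / b := by
    intro r k v
    rw [integral_ind_eq P (hHmeas r k) v, hHunif r k v]
    simp [ENNReal.toReal_div]
  -- expectation of the collision indicator when x j ≠ i
  have hindmean : ∀ j, x j ≠ i → ∫ ω, ind j ω ∂P = 1 / b := by
    intro j h
    have hrw : ind j = fun ω => ∑ v : Fin b,
        (if H (grp j) (x j) ω = v then (1:ℝ) else 0) * (if H (grp j) i ω = v then 1 else 0) := by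
      funext ω
      simp only [hind]
      exact (sum_ind_eq _ _).symm
    rw [hrw, integral_finset_sum _ (fun v _ => by
      refine Integrable.mono' (integrable_const (1:ℝ))
        (((hImeas _ _ v).mul (hImeas _ _ v)).aestronglyMeasurable) (ae_of_all _ fun ω => ?_)
      by_cases h1 : H (grp j) (x j) ω = v <;> by_cases h2 : H (grp j) i ω = v <;>
        simp [h1, h2])]
    have hterm : ∀ v : Fin b,
        ∫ ω, (if H (grp j) (x j) ω = v then (1:ℝ) else 0)
          * (if H (grp j) i ω = v then 1 else 0) ∂P = (1/b) * (1/b) := by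
      intro v
      have hindep : IndepFun (fun ω => if H (grp j) (x j) ω = v then (1:ℝ) else 0)
          (fun ω => if H (grp j) i ω = v then (1:ℝ) else 0) P :=
        (hHpair (grp j) (x j) i h).comp
          (Measurable.of_discrete (f := fun u : Fin b => if u = v then (1:ℝ) else 0))
          (Measurable.of_discrete (f := fun u : Fin b => if u = v then (1:ℝ) else 0))
      rw [hindep.integral_fun_mul_eq_mul_integral (hImeas _ _ v).aestronglyMeasurable
        (hImeas _ _ v).aestronglyMeasurable, hunifR, hunifR]
    rw [Finset.sum_congr rfl fun v _ => hterm v, Finset.sum_const, Finset.card_univ,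
      Fintype.card_fin, nsmul_eq_mul]
    field_simp
  -- expectation of each α-term
  have hterm1 : ∀ j, ∫ ω, α j ω * ind j ω ∂P = if x j = i then β else β / b := by
    intro j
    by_cases h : x j = i
    · have heq : (fun ω => α j ω * ind j ω) = α j := by
        funext ω
        simp only [hind, h]
        simp
      rw [heq, hαmean j, if_pos h]
    · have hφ : Measurable (fun v : Fin g × Fin d → Fin b =>
          if v (grp j, x j) = v (grp j, i) then (1:ℝ) else 0) :=
        Measurable.ite (measurableSet_eq_fin (measurable_pi_apply _) (measurable_pi_apply _))
          measurable_const measurable_const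
      have hindep : IndepFun (α j) (ind j) P :=
        hαH.comp (measurable_pi_apply j) hφ
      rw [hindep.integral_fun_mul_eq_mul_integral (hαmeas j).aestronglyMeasurable
        (hindmeas j).aestronglyMeasurable, hαmean j, hindmean j h, if_neg h]
      ring
  -- expectation of each z-term
  have hterm2 : ∀ r, ∫ ω, z r (H r i ω) ω ∂P = μ := by
    intro r
    rw [hzrw r, integral_finset_sum _ (fun k _ => hint2k r k)]
    have hterm : ∀ k : Fin b,
        ∫ ω, (if H r i ω = k then (1:ℝ) else 0) * z r k ω ∂P = (1/b) * μ := by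
      intro k
      have hφ : Measurable (fun p : (Fin n → ℝ) × (Fin g × Fin d → Fin b) =>
          if p.2 (r, i) = k then (1:ℝ) else 0) := by
        refine Measurable.ite ?_ measurable_const measurable_const
        have hmp : Measurable (fun p : (Fin n → ℝ) × (Fin g × Fin d → Fin b) => p.2 (r, i)) :=
          (measurable_pi_apply (r, i)).comp measurable_snd
        exact hmp (measurableSet_singleton k)
      have hindep : IndepFun (fun ω => if H r i ω = k then (1:ℝ) else 0) (z r k) P :=
        hzrest.symm.comp hφ (measurable_pi_apply (r, k))
      rw [hindep.integral_fun_mul_eq_mul_integral (hImeas r i k).aestronglyMeasurable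
        (hzmeas r k).aestronglyMeasurable, hunifR r i k, hzmean r k]
    rw [Finset.sum_congr rfl fun k _ => hterm k, Finset.sum_const, Finset.card_univ,
      Fintype.card_fin, nsmul_eq_mul]
    field_simp
  -- put everything together
  have hSint : Integrable S P := by
    rw [hS]; exact integrable_finset_sum _ fun j _ => hint1 j
  have hTint : Integrable T P := by
    rw [hT]; exact integrable_finset_sum _ fun r _ => hint2 r
  have hSmean : ∫ ω, S ω ∂P = ∑ j, (if x j = i then β else β / b) := by
    rw [hS]
    rw [integral_finset_sum _ fun j _ => hint1 j]
    exact Finset.sum_congr rfl fun j _ => hterm1 j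
  have hTmean : ∫ ω, T ω ∂P = g * μ := by
    rw [hT]
    rw [integral_finset_sum _ fun r _ => hint2 r]
    rw [Finset.sum_congr rfl fun r _ => hterm2 r, Finset.sum_const, Finset.card_univ,
      Fintype.card_fin, nsmul_eq_mul]
  have hST : Integrable (fun ω => S ω + T ω) P := hSint.add hTint
  rw [integral_congr_ae (ae_of_all _ hpoint), integral_const_mul,
    integral_sub hST (integrable_const _),
    integral_add hSint hTint, integral_const, hSmean, hTmean]
  simp only [measure_univ, probReal_univ, ENNReal.toReal_one, smul_eq_mul, one_mul]
  -- count items equal to i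
  rw [Finset.sum_ite, Finset.sum_const, Finset.sum_const, nsmul_eq_mul, nsmul_eq_mul]
  set m : ℕ := (Finset.univ.filter fun j => x j = i).card with hm
  set m' : ℕ := (Finset.univ.filter fun j => ¬ x j = i).card with hm'
  have hmn : (m : ℝ) + m' = n := by
    have := Finset.card_filter_add_card_filter_not
      (s := (Finset.univ : Finset (Fin n))) (p := fun j => x j = i)
    rw [Finset.card_univ, Fintype.card_fin] at this
    exact_mod_cast this
  rw [hf i, ← hm]
  have hm'' : (m' : ℝ) = n - m := by linarith
  rw [hm'', hCdef]
  field_simp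
  ring
end
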